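/- arXiv:2407.08637 — 4 statements merged into one kernel-verified Lean document; each statement's English description precedes it below -/
import Mathlib

section
/- There is an absolute constant c > 0 such that the following holds. Let δ ∈ (0,1] and let N, N' ∈ ℕ satisfy N' ≥ δ^{−1/2}·N and N ≥ δ^{−1}. If f : ℤ → ℂ is a 1-bounded function supported on [N] with ‖f‖_{[±N']}² ≥ δN, then |∑_{x∈ℤ} f(x)| ≥ c·δ^{1/4}·N. -/
open Finset

noncomputable section

/-- `[N] = {0, 1, ..., N-1}` as a finset of integers. -/
def I0 (N : ℤ) : Finset ℤ := Finset.Ico 0 N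

/-- `[±N] = {-N+1, ..., N-1}` as a finset of integers. -/
def Ipm (N : ℤ) : Finset ℤ := Finset.Ioo (-N) N

/-- `f` is 1-bounded. -/
def Bounded1 {α : Type*} (f : α → ℂ) : Prop := ∀ x, ‖f x‖ ≤ 1

/-- Iterated complex conjugation `𝒞^n`. -/
def conjIter (n : ℕ) (z : ℂ) : ℂ := if Even n then z else (starRingEnd ℂ) z

/-- The `2^s`-th power of the box norm of `f` along the finsets `E 0, ..., E (s-1)`. -/
def boxPow {G : Type*} [AddCommGroup G] {s : ℕ} (E : Fin s → Finset G) (f : G → ℂ) : ℂ :=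
  (∑ h ∈ Fintype.piFinset E, ∑ h' ∈ Fintype.piFinset E,
      ∑' x : G, ∏ ε : Fin s → Bool,
        conjIter (Finset.univ.filter (fun i => ε i)).card
          (f (x + ∑ i, if ε i then h' i else h i)))
    / ((∏ i, ((E i).card : ℂ)) ^ 2)

lemma sumsq_nat (n : ℕ) : ∑ k ∈ Finset.range n, (k:ℝ)^2 ≤ (n:ℝ)^3/3 := by
  induction n with
  | zero => simp
  | succ m ih => rw [Finset.sum_range_succ]; push_cast; nlinarith [ih, Nat.cast_nonneg (α := ℝ) m]

lemma prod_eps (f : ℤ → ℂ) (h h' : Fin 1 → ℤ) (x : ℤ) :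
    (∏ ε : Fin 1 → Bool, conjIter (Finset.univ.filter (fun i => ε i)).card
      (f (x + ∑ i, if ε i then h' i else h i)))
    = f (x + h 0) * (starRingEnd ℂ) (f (x + h' 0)) := by
  rw [← Equiv.prod_comp (Equiv.funUnique (Fin 1) Bool).symm]
  rw [Fintype.prod_bool]
  simp [conjIter, Equiv.funUnique, mul_comm]

lemma pisum (P : Finset ℤ) (G : (Fin 1 → ℤ) → ℂ) :
    ∑ h ∈ Fintype.piFinset (fun _ : Fin 1 => P), G h = ∑ a ∈ P, G (fun _ => a) := by
  apply Finset.sum_nbij' (i := fun h => h 0) (j := fun a => fun _ => a)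
  · intro h hh; exact (Fintype.mem_piFinset.1 hh) 0
  · intro a ha; exact Fintype.mem_piFinset.2 (fun _ => ha)
  · intro h hh; funext i; rw [Fin.eq_zero i]
  · intro a ha; rfl
  · intro h hh; exact congrArg G (funext fun i => by rw [Fin.eq_zero i])

lemma boxPow_eq (f : ℤ → ℂ) (N N' : ℕ) (hsupp : ∀ x : ℤ, f x ≠ 0 → x ∈ I0 (N:ℤ)) :
    boxPow (fun _ : Fin 1 => Ipm (N':ℤ)) f
    = (((∑ x ∈ Finset.Icc (-(N':ℤ)) ((N:ℤ)+(N':ℤ)), Complex.normSq (∑ h ∈ Ipm (N':ℤ), f (x+h)))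
        / (((Ipm (N':ℤ)).card:ℝ))^2 : ℝ) : ℂ) := by
  set P := Ipm (N':ℤ) with hP
  set T := Finset.Icc (-(N':ℤ)) ((N:ℤ)+(N':ℤ)) with hT
  have hzero : ∀ (a b : ℤ), a ∈ P → ∀ x ∉ T, f (x + a) * (starRingEnd ℂ) (f (x + b)) = 0 := by
    intro a b ha x hx
    have : f (x + a) = 0 := by
      by_contra hf
      have h1 := hsupp _ hf
      simp only [I0, Finset.mem_Ico] at h1
      simp only [hP, Ipm, Finset.mem_Ioo] at ha
      simp only [hT, Finset.mem_Icc, not_and, not_le] at hx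
      omega
    rw [this, zero_mul]
  unfold boxPow
  have step1 : (∑ h ∈ Fintype.piFinset (fun _ : Fin 1 => P), ∑ h' ∈ Fintype.piFinset (fun _ : Fin 1 => P),
      ∑' x : ℤ, ∏ ε : Fin 1 → Bool,
        conjIter (Finset.univ.filter (fun i => ε i)).card
          (f (x + ∑ i, if ε i then h' i else h i)))
      = ∑ x ∈ T, (Complex.normSq (∑ h ∈ P, f (x+h)) : ℂ) := by
    have e1 : ∀ h ∈ Fintype.piFinset (fun _ : Fin 1 => P), ∀ h' ∈ Fintype.piFinset (fun _ : Fin 1 => P),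
        (∑' x : ℤ, ∏ ε : Fin 1 → Bool,
          conjIter (Finset.univ.filter (fun i => ε i)).card
            (f (x + ∑ i, if ε i then h' i else h i)))
        = ∑ x ∈ T, f (x + h 0) * (starRingEnd ℂ) (f (x + h' 0)) := by
      intro h hh h' hh'
      rw [tsum_congr (fun x => prod_eps f h h' x)]
      exact tsum_eq_sum (fun x hx => hzero (h 0) (h' 0) ((Fintype.mem_piFinset.1 hh) 0) x hx)
    rw [Finset.sum_congr rfl (fun h hh => Finset.sum_congr rfl (fun h' hh' => e1 h hh h' hh'))]
    rw [pisum, Finset.sum_congr rfl (fun a _ => pisum P _)]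
    calc ∑ a ∈ P, ∑ b ∈ P, ∑ x ∈ T, f (x + a) * (starRingEnd ℂ) (f (x + b))
        = ∑ a ∈ P, ∑ x ∈ T, ∑ b ∈ P, f (x + a) * (starRingEnd ℂ) (f (x + b)) :=
          Finset.sum_congr rfl (fun a _ => Finset.sum_comm)
      _ = ∑ x ∈ T, ∑ a ∈ P, ∑ b ∈ P, f (x + a) * (starRingEnd ℂ) (f (x + b)) := Finset.sum_comm
      _ = ∑ x ∈ T, (Complex.normSq (∑ h ∈ P, f (x+h)) : ℂ) := by
          apply Finset.sum_congr rfl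
          intro x _
          rw [← Finset.sum_mul_sum, ← map_sum, Complex.mul_conj]
  rw [step1]
  rw [Fin.prod_univ_one]
  push_cast
  rfl

lemma F_reindex (f : ℤ → ℂ) (N' : ℕ) (x : ℤ) :
    (∑ h ∈ Ipm (N':ℤ), f (x+h)) = ∑ y ∈ Finset.Ioo (x + -(N':ℤ)) (x + N'), f y := by
  rw [← Finset.map_add_left_Ioo, Finset.sum_map]
  rfl

lemma F_eq (f : ℤ → ℂ) (N N' : ℕ) (hsupp : ∀ x : ℤ, f x ≠ 0 → x ∈ I0 (N:ℤ)) (x : ℤ)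
    (hx : x ∈ Finset.Icc ((N:ℤ)-N') ((N':ℤ)-1)) :
    (∑ h ∈ Ipm (N':ℤ), f (x+h)) = ∑ y ∈ I0 (N:ℤ), f y := by
  rw [F_reindex]
  simp only [Finset.mem_Icc] at hx
  refine (Finset.sum_subset ?_ ?_).symm
  · intro y hy
    simp only [I0, Finset.mem_Ico] at hy
    simp only [Finset.mem_Ioo]
    omega
  · intro y _ hy
    by_contra hf
    exact hy (hsupp y hf)

lemma F_bound (f : ℤ → ℂ) (N N' : ℕ) (hsupp : ∀ x : ℤ, f x ≠ 0 → x ∈ I0 (N:ℤ))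
    (hb : Bounded1 f) (x : ℤ) :
    ‖∑ h ∈ Ipm (N':ℤ), f (x+h)‖
      ≤ ((Finset.Ioo (x + -(N':ℤ)) (x + N') ∩ I0 (N:ℤ)).card : ℝ) := by
  rw [F_reindex]
  rw [show (∑ y ∈ Finset.Ioo (x + -(N':ℤ)) (x + N'), f y)
      = ∑ y ∈ Finset.Ioo (x + -(N':ℤ)) (x + N') ∩ I0 (N:ℤ), f y from
    (Finset.sum_subset (Finset.inter_subset_left) (by
      intro y hy hy2
      by_contra hf
      exact hy2 (Finset.mem_inter.2 ⟨hy, hsupp y hf⟩))).symm]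
  calc ‖∑ y ∈ Finset.Ioo (x + -(N':ℤ)) (x + N') ∩ I0 (N:ℤ), f y‖
      ≤ ∑ y ∈ Finset.Ioo (x + -(N':ℤ)) (x + N') ∩ I0 (N:ℤ), ‖f y‖ := by
        exact norm_sum_le _ _
    _ ≤ ∑ y ∈ Finset.Ioo (x + -(N':ℤ)) (x + N') ∩ I0 (N:ℤ), 1 := Finset.sum_le_sum (fun y _ => hb y)
    _ = _ := by simp

lemma sum_bound (f : ℤ → ℂ) (N N' : ℕ) (hsupp : ∀ x : ℤ, f x ≠ 0 → x ∈ I0 (N:ℤ))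
    (hb : Bounded1 f) (hNN' : N ≤ N') (hN1 : 1 ≤ N) :
    ∑ x ∈ Finset.Icc (-(N':ℤ)) ((N:ℤ)+N'), Complex.normSq (∑ h ∈ Ipm (N':ℤ), f (x+h))
    ≤ ((Ipm (N':ℤ)).card : ℝ) * (‖∑ y ∈ I0 (N:ℤ), f y‖)^2 + 2/3*(N:ℝ)^3 := by
  set T := Finset.Icc (-(N':ℤ)) ((N:ℤ)+N') with hTdef
  set A := Finset.Icc ((N:ℤ)-N') ((N':ℤ)-1) with hAdef
  set L := Finset.Icc (-(N':ℤ)) ((N:ℤ)-N'-1) with hLdef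
  set R := Finset.Icc ((N':ℤ)) ((N:ℤ)+N') with hRdef
  have hAT : A ⊆ T := by
    intro x hx
    simp only [hAdef, Finset.mem_Icc] at hx
    simp only [hTdef, Finset.mem_Icc]
    omega
  rw [← Finset.sum_sdiff hAT]
  have hA : ∑ x ∈ A, Complex.normSq (∑ h ∈ Ipm (N':ℤ), f (x+h))
      ≤ ((Ipm (N':ℤ)).card : ℝ) * (‖∑ y ∈ I0 (N:ℤ), f y‖)^2 := by
    rw [Finset.sum_congr rfl (fun x hx => by rw [F_eq f N N' hsupp x hx])]
    rw [Finset.sum_const, nsmul_eq_mul, ← Complex.sq_norm]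
    apply mul_le_mul_of_nonneg_right _ (sq_nonneg _)
    have h1 : A.card ≤ (Ipm (N':ℤ)).card := by
      rw [hAdef, Ipm, Int.card_Icc, Int.card_Ioo]
      omega
    exact_mod_cast h1
  have hcardL : ∀ x ∈ L, ((Finset.Ioo (x + -(N':ℤ)) (x + N') ∩ I0 (N:ℤ)).card : ℝ)
      ≤ (((x + N').toNat : ℕ) : ℝ) := by
    intro x hx
    have hsub : Finset.Ioo (x + -(N':ℤ)) (x + N') ∩ I0 (N:ℤ) ⊆ Finset.Ico 0 (x + N') := by
      intro y hy
      simp only [Finset.mem_inter, Finset.mem_Ioo, I0, Finset.mem_Ico] at hy ⊢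
      omega
    have := Finset.card_le_card hsub
    rw [Int.card_Ico] at this
    exact_mod_cast (by omega : (Finset.Ioo (x + -(N':ℤ)) (x + N') ∩ I0 (N:ℤ)).card ≤ (x + N').toNat)
  have hcardR : ∀ x ∈ R, ((Finset.Ioo (x + -(N':ℤ)) (x + N') ∩ I0 (N:ℤ)).card : ℝ)
      ≤ ((((N:ℤ) + N' - 1 - x).toNat : ℕ) : ℝ) := by
    intro x hx
    have hsub : Finset.Ioo (x + -(N':ℤ)) (x + N') ∩ I0 (N:ℤ) ⊆ Finset.Ico (x - N' + 1) N := by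
      intro y hy
      simp only [Finset.mem_inter, Finset.mem_Ioo, I0, Finset.mem_Ico] at hy ⊢
      omega
    have := Finset.card_le_card hsub
    rw [Int.card_Ico] at this
    exact_mod_cast (by omega : (Finset.Ioo (x + -(N':ℤ)) (x + N') ∩ I0 (N:ℤ)).card ≤ ((N:ℤ) + N' - 1 - x).toNat)
  have hsumL : ∑ x ∈ L, ((((x + N').toNat : ℕ) : ℝ))^2 ≤ (N:ℝ)^3/3 := by
    have : ∑ x ∈ L, ((((x + N').toNat : ℕ) : ℝ))^2 = ∑ k ∈ Finset.range N, (k:ℝ)^2 := by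
      apply Finset.sum_nbij' (i := fun x : ℤ => (x + N').toNat) (j := fun k : ℕ => (k:ℤ) - N')
      · intro x hx
        simp only [hLdef, Finset.mem_Icc] at hx
        simp only [Finset.mem_range]
        omega
      · intro k hk
        simp only [Finset.mem_range] at hk
        simp only [hLdef, Finset.mem_Icc]
        omega
      · intro x hx; simp only [hLdef, Finset.mem_Icc] at hx; omega
      · intro k hk; simp only [Finset.mem_range] at hk; omega
      · intro x hx; rfl
    rw [this]; exact sumsq_nat N
  have hsumR : ∑ x ∈ R, (((((N:ℤ) + N' - 1 - x).toNat : ℕ) : ℝ))^2 ≤ (N:ℝ)^3/3 := by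
    have e1 : ∑ x ∈ R, (((((N:ℤ) + N' - 1 - x).toNat : ℕ) : ℝ))^2
        = ∑ k ∈ Finset.range (N+1), (((((k:ℤ) - 1).toNat : ℕ)) : ℝ)^2 := by
      apply Finset.sum_nbij' (i := fun x : ℤ => ((N:ℤ) + N' - x).toNat) (j := fun k : ℕ => (N:ℤ) + N' - k)
      · intro x hx
        simp only [hRdef, Finset.mem_Icc] at hx
        simp only [Finset.mem_range]
        omega
      · intro k hk
        simp only [Finset.mem_range] at hk
        simp only [hRdef, Finset.mem_Icc]
        omega
      · intro x hx; simp only [hRdef, Finset.mem_Icc] at hx; omega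
      · intro k hk; simp only [Finset.mem_range] at hk; omega
      · intro x hx
        simp only [hRdef, Finset.mem_Icc] at hx
        have : ((N:ℤ) + N' - 1 - x).toNat = ((((N:ℤ) + N' - x).toNat : ℤ) - 1).toNat := by omega
        rw [this]
    rw [e1, Finset.sum_range_succ']
    have e2 : ∀ k ∈ Finset.range N, (((((k:ℕ)+1:ℕ):ℤ) - 1).toNat : ℝ)^2 = (k:ℝ)^2 := by
      intro k hk
      have : ((((k:ℕ)+1:ℕ):ℤ) - 1).toNat = k := by omega
      rw [this]
    rw [Finset.sum_congr rfl e2]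
    simpa using sumsq_nat N
  have hTA : T \ A ⊆ L ∪ R := by
    intro x hx
    simp only [hTdef, hAdef, Finset.mem_sdiff, Finset.mem_Icc, not_and, not_le] at hx
    simp only [hLdef, hRdef, Finset.mem_union, Finset.mem_Icc]
    omega
  have hLR : Disjoint L R := by
    rw [Finset.disjoint_left]
    intro x hx hx'
    simp only [hLdef, Finset.mem_Icc] at hx
    simp only [hRdef, Finset.mem_Icc] at hx'
    omega
  have hB : ∑ x ∈ T \ A, Complex.normSq (∑ h ∈ Ipm (N':ℤ), f (x+h)) ≤ 2/3*(N:ℝ)^3 := by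
    calc ∑ x ∈ T \ A, Complex.normSq (∑ h ∈ Ipm (N':ℤ), f (x+h))
        ≤ ∑ x ∈ T \ A, ((Finset.Ioo (x + -(N':ℤ)) (x + N') ∩ I0 (N:ℤ)).card : ℝ)^2 := by
          apply Finset.sum_le_sum
          intro x _
          rw [← Complex.sq_norm]
          exact pow_le_pow_left₀ (norm_nonneg _) (F_bound f N N' hsupp hb x) 2
      _ ≤ ∑ x ∈ L ∪ R, ((Finset.Ioo (x + -(N':ℤ)) (x + N') ∩ I0 (N:ℤ)).card : ℝ)^2 :=
          Finset.sum_le_sum_of_subset_of_nonneg hTA (fun x _ _ => by positivity)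
      _ = (∑ x ∈ L, ((Finset.Ioo (x + -(N':ℤ)) (x + N') ∩ I0 (N:ℤ)).card : ℝ)^2)
          + ∑ x ∈ R, ((Finset.Ioo (x + -(N':ℤ)) (x + N') ∩ I0 (N:ℤ)).card : ℝ)^2 :=
          Finset.sum_union hLR
      _ ≤ (∑ x ∈ L, ((((x + N').toNat : ℕ) : ℝ))^2)
          + ∑ x ∈ R, (((((N:ℤ) + N' - 1 - x).toNat : ℕ) : ℝ))^2 := by
          apply add_le_add
          · exact Finset.sum_le_sum (fun x hx => pow_le_pow_left₀ (by positivity) (hcardL x hx) 2)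
          · exact Finset.sum_le_sum (fun x hx => pow_le_pow_left₀ (by positivity) (hcardR x hx) 2)
      _ ≤ (N:ℝ)^3/3 + (N:ℝ)^3/3 := add_le_add hsumL hsumR
      _ = 2/3*(N:ℝ)^3 := by ring
  linarith [hA, hB]

lemma arith1 (p n m s : ℝ) (hp0 : 0 < p) (hp1 : p ≤ 1) (hn : 1 ≤ n)
    (hm : 2*n ≤ p*m + p) (hm1 : 1 ≤ m)
    (hmain : p^2*n*m^2 ≤ m*s^2 + 2/3*n^3) : p*n^2/4 ≤ s^2 := by
  have hpmn : n ≤ p*m := by nlinarith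
  have h3 : n^3 ≤ p*n^2*m := by nlinarith [mul_le_mul_of_nonneg_left hpmn (sq_nonneg n)]
  have fact1 : p*n*m*(2*n - p) ≤ p*n*m*(p*m) := by
    apply mul_le_mul_of_nonneg_left (by linarith) (by positivity)
  have fact2 : p*p*n*m ≤ p*n*n*m := by
    have hpn : p ≤ n := by linarith
    nlinarith [mul_nonneg (mul_nonneg hp0.le (by linarith : (0:ℝ) ≤ n)) (by linarith : (0:ℝ) ≤ m)]
  have h4 : m*(p*n^2/4) + 2/3*n^3 ≤ p^2*n*m^2 := by nlinarith [fact1, fact2, h3]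
  have h5 : m*(p*n^2/4) ≤ m*s^2 := by linarith
  exact le_of_mul_le_mul_left h5 (by linarith)

lemma arith2 (u n s : ℝ) (hu0 : 0 < u) (hn : 1 ≤ n) (hs : 0 ≤ s)
    (key : u^2*n^2/4 ≤ s^2) : 1/2*u*n ≤ s := by
  nlinarith [sq_nonneg (s + 1/2*u*n), mul_pos hu0 (by linarith : (0:ℝ) < n)]

/-- the one-dimensional `U¹` inverse theorem. -/
theorem stmt12 :
    ∃ c : ℝ, 0 < c ∧
      ∀ δ : ℝ, 0 < δ → δ ≤ 1 →
      ∀ N N' : ℕ, δ ^ (-(1 : ℝ) / 2) * (N : ℝ) ≤ (N' : ℝ) → δ⁻¹ ≤ (N : ℝ) →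
      ∀ f : ℤ → ℂ, Bounded1 f → (∀ x : ℤ, f x ≠ 0 → x ∈ I0 (N : ℤ)) →
        δ * (N : ℝ) ≤ (boxPow (fun _ : Fin 1 => Ipm (N' : ℤ)) f).re →
        c * δ ^ ((1 : ℝ) / 4) * (N : ℝ) ≤ ‖∑' x : ℤ, f x‖ := by
  refine ⟨1/2, by norm_num, ?_⟩
  intro δ hδ0 hδ1 N N' hNN' hNδ f hb hsupp hbox
  set u := δ ^ ((1:ℝ)/4) with hu
  have hu0 : 0 < u := Real.rpow_pos_of_pos hδ0 _
  have hu1 : u ≤ 1 := Real.rpow_le_one hδ0.le hδ1 (by norm_num)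
  set p := u^2 with hp
  have hp0 : 0 < p := by positivity
  have hp1 : p ≤ 1 := by nlinarith
  have hδu : δ = p^2 := by
    rw [hp, hu, ← Real.rpow_natCast (δ ^ ((1:ℝ)/4)) 2, ← Real.rpow_mul hδ0.le,
      ← Real.rpow_natCast _ 2, ← Real.rpow_mul hδ0.le]
    norm_num
  have hhalf : δ ^ (-(1:ℝ)/2) = p⁻¹ := by
    have h1 : δ ^ (-(1:ℝ)/2) * p = 1 := by
      rw [hp, hu, ← Real.rpow_natCast (δ ^ ((1:ℝ)/4)) 2, ← Real.rpow_mul hδ0.le,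
        ← Real.rpow_add hδ0]
      norm_num
    field_simp at h1 ⊢
    linarith
  -- basic size facts
  have hδinv : (1:ℝ) ≤ δ⁻¹ := by
    rw [le_inv_comm₀ one_pos hδ0] at *
    · simpa using hδ1
  have hN1R : (1:ℝ) ≤ (N:ℝ) := le_trans hδinv hNδ
  have hN1 : 1 ≤ N := by exact_mod_cast hN1R
  have hpN' : p⁻¹ * (N:ℝ) ≤ (N':ℝ) := by rw [← hhalf]; exact hNN'
  have hNN'R : (N:ℝ) ≤ (N':ℝ) := by
    calc (N:ℝ) = 1 * (N:ℝ) := by ring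
      _ ≤ p⁻¹ * (N:ℝ) := by
          apply mul_le_mul_of_nonneg_right _ (by linarith)
          rw [le_inv_comm₀ one_pos hp0]; simpa using hp1
      _ ≤ (N':ℝ) := hpN'
  have hNleN' : N ≤ N' := by exact_mod_cast hNN'R
  have hN'1 : 1 ≤ N' := le_trans hN1 hNleN'
  -- the card of Ipm N'
  have hcard : (((Ipm (N':ℤ)).card : ℕ) : ℝ) = 2*(N':ℝ) - 1 := by
    rw [Ipm, Int.card_Ioo]
    have : ((N':ℤ) - -(N':ℤ) - 1).toNat = 2*N' - 1 := by omega
    rw [this, Nat.cast_sub (by omega)]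
    push_cast
    ring
  set m : ℝ := (((Ipm (N':ℤ)).card : ℕ) : ℝ) with hm
  have hN'1R : (1:ℝ) ≤ (N':ℝ) := by exact_mod_cast hN'1
  have hm1 : 1 ≤ m := by rw [hcard]; linarith
  have hm0 : 0 < m := by linarith
  -- rewrite the box-norm hypothesis
  rw [boxPow_eq f N N' hsupp, Complex.ofReal_re] at hbox
  have hbox2 : δ*(N:ℝ)*m^2 ≤ ∑ x ∈ Finset.Icc (-(N':ℤ)) ((N:ℤ)+(N':ℤ)),
      Complex.normSq (∑ h ∈ Ipm (N':ℤ), f (x+h)) := by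
    have := (le_div_iff₀ (pow_pos hm0 2 : (0:ℝ) < m^2)).mp hbox
    exact this
  have hSB := sum_bound f N N' hsupp hb hNleN' hN1
  set s := ‖∑ y ∈ I0 (N:ℤ), f y‖ with hs
  have hs0 : 0 ≤ s := norm_nonneg _
  have hmain : p^2*(N:ℝ)*m^2 ≤ m*s^2 + 2/3*(N:ℝ)^3 := by
    rw [← hδu]
    exact le_trans hbox2 hSB
  have hpm : 2*(N:ℝ) ≤ p*m + p := by
    have h2 : (N:ℝ) ≤ p * (N':ℝ) := by
      calc (N:ℝ) = p * (p⁻¹ * (N:ℝ)) := by field_simp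
        _ ≤ p * (N':ℝ) := mul_le_mul_of_nonneg_left hpN' hp0.le
    rw [hcard]
    linarith
  have key : p*(N:ℝ)^2/4 ≤ s^2 := arith1 p (N:ℝ) m s hp0 hp1 hN1R hpm hm1 hmain
  have htsum : (∑' x : ℤ, f x) = ∑ y ∈ I0 (N:ℤ), f y :=
    tsum_eq_sum (fun x hx => by by_contra hf; exact hx (hsupp x hf))
  rw [htsum, ← hs]
  exact arith2 u (N:ℝ) s hu0 hN1R hs0 (by rw [← hp]; exact key)
end
end

section
/- There is an absolute constant c > 0 such that the following holds. Let δ ∈ (0,1] and let N, N' ∈ ℕ satisfy N' ≥ (δ/2)^{−1/2}·N and N ≥ 2δ^{−1}, and let f : ℤ² → ℂ be a 1-bounded function supported on [N]². Then: (i) if ‖f‖_{e_1·[±N']}² ≥ δN², there is a 1-bounded b : ℤ → ℂ with Re(∑_{x,y} f(x,y) b(y)) ≥ c·δ^{5/4}·N²; (ii) if ‖f‖_{e_2·[±N']}² ≥ δN², there is a 1-bounded b : ℤ → ℂ with Re(∑_{x,y} f(x,y) b(x)) ≥ c·δ^{5/4}·N²; (iii) if ‖f‖_{(e_2−e_1)·[±N']}²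 ≥ δN², there is a 1-bounded b : ℤ → ℂ with Re(∑_{x,y} f(x,y) b(x+y)) ≥ c·δ^{5/4}·N². -/
open Finset

noncomputable section

/-- `f : ℤ² → ℂ` is supported on `[N]²`. -/
def SuppOn2 (N : ℤ) (f : ℤ × ℤ → ℂ) : Prop :=
  ∀ p : ℤ × ℤ, f p ≠ 0 → p.1 ∈ I0 N ∧ p.2 ∈ I0 N

/-- The dilate `{v·h : h ∈ S} ⊆ ℤ²` of a finset `S ⊆ ℤ` along the direction `v ∈ ℤ²`. -/
def dil (v : ℤ × ℤ) (S : Finset ℤ) : Finset (ℤ × ℤ) := S.image (fun h => (v.1 * h, v.2 * h))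

lemma summable_finsupp {G : Type*} [AddCommGroup G] {f : G → ℂ} (T : Finset G)
    (h : ∀ p, f p ≠ 0 → p ∈ T) : Summable f :=
  summable_of_ne_finset_zero (s := T) (fun p hp => by_contra fun h0 => hp (h p h0))

lemma sum_piFinset_one {G M : Type*} [DecidableEq G] [AddCommMonoid M] (E : Finset G)
    (F : (Fin 1 → G) → M) :
    ∑ h ∈ Fintype.piFinset (fun _ : Fin 1 => E), F h = ∑ a ∈ E, F (fun _ => a) := by
  apply Finset.sum_nbij' (i := fun h => h 0) (j := fun a => fun _ => a)
  · intro h hh; exact (Fintype.mem_piFinset.1 hh) 0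
  · intro a ha; exact Fintype.mem_piFinset.2 (fun _ => ha)
  · intro h hh; funext i; rw [Subsingleton.elim i 0]
  · intro a ha; rfl
  · intro h hh; congr 1; funext i; rw [Subsingleton.elim i 0]

lemma boxPow_one_re {G : Type*} [AddCommGroup G] [DecidableEq G] (E : Finset G) (f : G → ℂ)
    (T : Finset G) (hsupp : ∀ p, f p ≠ 0 → p ∈ T) :
    (boxPow (fun _ : Fin 1 => E) f).re
      = (∑' x : G, (‖∑ a ∈ E, f (x + a)‖)^2) / ((E.card : ℝ))^2 := by
  have hsummable : ∀ a b : G, Summable (fun x => (starRingEnd ℂ) (f (x + b)) * f (x + a)) := by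
    intro a b
    apply summable_finsupp (T.image (fun p => p - a))
    intro p hp
    have : f (p + a) ≠ 0 := fun h0 => hp (by simp [h0])
    exact Finset.mem_image.2 ⟨p + a, hsupp _ this, add_sub_cancel_right _ _⟩
  have key : ∀ h h' : Fin 1 → G,
      (∑' x : G, ∏ ε : Fin 1 → Bool,
        conjIter (Finset.univ.filter (fun i => ε i)).card
          (f (x + ∑ i, if ε i then h' i else h i)))
      = ∑' x : G, (starRingEnd ℂ) (f (x + h' 0)) * f (x + h 0) := by
    intro h h'
    congr 1; funext x
    rw [← Equiv.prod_comp (Equiv.funUnique (Fin 1) Bool).symm, Fintype.prod_bool]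
    simp [conjIter, Equiv.funUnique, Fin.sum_univ_one]
  unfold boxPow
  simp only [key]
  rw [sum_piFinset_one]
  have : ∀ a ∈ E, (∑ h' ∈ Fintype.piFinset (fun _ : Fin 1 => E),
      ∑' x : G, (starRingEnd ℂ) (f (x + h' 0)) * f (x + a))
      = ∑' x : G, ((starRingEnd ℂ) (∑ b ∈ E, f (x + b))) * f (x + a) := by
    intro a _
    rw [sum_piFinset_one, ← Summable.tsum_finsetSum (fun b _ => hsummable a b)]
    congr 1; funext x
    rw [map_sum, Finset.sum_mul]
  rw [Finset.sum_congr rfl this, ← Summable.tsum_finsetSum]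
  · have : ∀ x : G, (∑ a ∈ E, ((starRingEnd ℂ) (∑ b ∈ E, f (x + b))) * f (x + a))
        = ((‖∑ a ∈ E, f (x + a)‖)^2 : ℝ) := by
      intro x
      rw [← Finset.mul_sum, Complex.conj_mul']
      norm_cast
    simp only [this]
    rw [← Complex.ofReal_tsum]
    have hden : (∏ _i : Fin 1, ((E.card : ℂ))) ^ 2 = (((E.card:ℝ))^2 : ℝ) := by
      rw [Fin.prod_univ_one]; push_cast; ring
    rw [hden, Complex.div_ofReal_re, Complex.ofReal_re]
  · intro a _
    apply summable_finsupp (T.image (fun p => p - a))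
    intro p hp
    exact Finset.mem_image.2 ⟨p + a, hsupp _ (right_ne_zero_of_mul hp), add_sub_cancel_right _ _⟩

lemma row_abs_le (g : ℤ×ℤ → ℂ) (hg : Bounded1 g) (T : Finset (ℤ×ℤ))
    (hsupp : ∀ p, g p ≠ 0 → p ∈ T) (z : ℤ) (s : Finset ℤ) :
    ‖∑ t' ∈ s, g (z, t')‖ ≤ ((T.filter (fun p => p.1 = z)).card : ℝ) := by
  classical
  rw [← Finset.sum_filter_of_ne (p := fun t' => (z, t') ∈ T)
    (fun t' _ h0 => hsupp _ h0)]
  calc ‖∑ t' ∈ s.filter (fun t' => (z, t') ∈ T), g (z, t')‖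
      ≤ ∑ t' ∈ s.filter (fun t' => (z, t') ∈ T), ‖g (z, t')‖ :=
        norm_sum_le _ _
    _ ≤ ∑ _t' ∈ s.filter (fun t' => (z, t') ∈ T), 1 :=
        Finset.sum_le_sum (fun t' _ => hg _)
    _ = ((s.filter (fun t' => (z, t') ∈ T)).card : ℝ) := by simp
    _ ≤ ((T.filter (fun p => p.1 = z)).card : ℝ) := by
        have : (s.filter (fun t' => (z, t') ∈ T)).card
            ≤ (T.filter (fun p => p.1 = z)).card := by
          apply Finset.card_le_card_of_injOn (fun t' => (z, t'))
          · intro t' ht'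
            exact Finset.mem_filter.2 ⟨(Finset.mem_filter.1 ht').2, rfl⟩
          · intro x _ y _ h; exact (Prod.ext_iff.1 h).2
        exact_mod_cast this

lemma arith_core (δ n m SS : ℝ) (hδ0 : 0 < δ) (h2n : 2 ≤ n)
    (hm : 2*n ≤ m * Real.sqrt δ) (hmpos : 0 < m) (hSS0 : 0 ≤ SS)
    (hmain : δ*n^2*m^2 ≤ m*n*SS + 2*n^4) : Real.sqrt δ * n^2 ≤ SS := by
  have hsqδ : 0 < Real.sqrt δ := Real.sqrt_pos.2 hδ0
  have hsqmul : Real.sqrt δ * Real.sqrt δ = δ := Real.mul_self_sqrt hδ0.le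
  have npos : (0:ℝ) < n := by linarith
  have h4 : 4*n^2 ≤ m^2*δ := by nlinarith
  have h5 : δ*n^2*m^2/2 ≤ m*n*SS := by nlinarith
  have h6 : 2*Real.sqrt δ*n ≤ δ*m := by nlinarith
  have h7 : m*n*(Real.sqrt δ * n^2) ≤ m*n*SS := by
    nlinarith [mul_le_mul_of_nonneg_right h6 (show (0:ℝ) ≤ m*n^2/2 by positivity)]
  exact le_of_mul_le_mul_left h7 (by positivity)

set_option maxHeartbeats 3000000 in
lemma core (δ : ℝ) (hδ0 : 0 < δ) (hδ1 : δ ≤ 1) (N N' : ℕ)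
    (hN' : Real.sqrt (2/δ) * N ≤ N') (hN : 2 * δ⁻¹ ≤ (N:ℝ))
    (g : ℤ×ℤ → ℂ) (hg : Bounded1 g)
    (T : Finset (ℤ×ℤ)) (hsupp : ∀ p, g p ≠ 0 → p ∈ T) (hT : T.card ≤ N^2)
    (a : ℤ → ℤ) (hrow : ∀ p ∈ T, p.2 ∈ Finset.Ico (a p.1) (a p.1 + N))
    (hbox : δ * (N:ℝ)^2 * (2*(N':ℝ)-1)^2
      ≤ ∑' x : ℤ×ℤ, (‖∑ h ∈ Ipm (N':ℤ), g (x + (0,h))‖)^2) :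
    ∃ b : ℤ → ℂ, Bounded1 b ∧ Real.sqrt δ * (N:ℝ)^2 ≤ (∑' p : ℤ×ℤ, g p * b p.1).re := by
  classical
  -- numeric setup
  set n : ℝ := (N:ℝ) with hn
  set n' : ℝ := (N':ℝ) with hn'
  have hδinv : (1:ℝ) ≤ δ⁻¹ := (one_le_inv₀ hδ0).2 hδ1
  have h2n : (2:ℝ) ≤ n := le_trans (by nlinarith) hN
  have hδn : (2:ℝ) ≤ δ * n := by
    have := mul_le_mul_of_nonneg_left hN hδ0.le
    rw [mul_comm 2 δ⁻¹, ← mul_assoc, mul_inv_cancel₀ hδ0.ne', one_mul] at this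
    linarith
  have hsqδ : 0 < Real.sqrt δ := Real.sqrt_pos.2 hδ0
  have hsqδ1 : Real.sqrt δ ≤ 1 := by
    rw [show (1:ℝ) = Real.sqrt 1 by simp]; exact Real.sqrt_le_sqrt hδ1
  have hsqmul : Real.sqrt δ * Real.sqrt δ = δ := Real.mul_self_sqrt hδ0.le
  have hsq2 : Real.sqrt 2 * Real.sqrt 2 = 2 := Real.mul_self_sqrt (by norm_num)
  have hsq2pos : (0:ℝ) ≤ Real.sqrt 2 := Real.sqrt_nonneg 2
  have hsq2n : Real.sqrt 2 * n ≤ n' * Real.sqrt δ := by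
    rw [Real.sqrt_div (by norm_num : (0:ℝ) ≤ 2) δ] at hN'
    have h1 := mul_le_mul_of_nonneg_right hN' hsqδ.le
    have h2 : Real.sqrt 2 / Real.sqrt δ * n * Real.sqrt δ = Real.sqrt 2 * n := by
      field_simp
    rw [h2] at h1; exact h1
  have hm : 2 * n ≤ (2 * n' - 1) * Real.sqrt δ := by nlinarith
  have hNN' : (N:ℤ) ≤ (N':ℤ) := by
    have h3 : (N:ℝ) ≤ (N':ℝ) := by rw [← hn, ← hn']; nlinarith
    exact_mod_cast h3
  have hmpos : (0:ℝ) < 2 * n' - 1 := by nlinarith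
  have hnn' : n ≤ n' := by nlinarith
  have hN2 : 2 ≤ N := by exact_mod_cast (hn ▸ h2n)
  have hN2' : (2:ℤ) ≤ (N:ℤ) := by exact_mod_cast hN2
  -- definitions
  set Z : Finset ℤ := T.image Prod.fst with hZ
  set S : ℤ → ℂ := fun z => ∑ t ∈ Finset.Ico (a z) (a z + N), g (z, t) with hS
  set G : ℤ×ℤ → ℂ := fun p => ∑ h ∈ Ipm (N':ℤ), g (p + (0,h)) with hG
  set mm : ℤ → ℕ := fun z => (T.filter (fun p => p.1 = z)).card with hmm
  have hrowmem : ∀ z t : ℤ, g (z,t) ≠ 0 → z ∈ Z ∧ t ∈ Finset.Ico (a z) (a z + N) := by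
    intro z t h0
    have hT' := hsupp _ h0
    exact ⟨Finset.mem_image_of_mem _ hT', hrow _ hT'⟩
  -- G as an interval sum
  have hGeq : ∀ z t : ℤ, G (z,t) = ∑ t' ∈ Finset.Ioo (t - N') (t + N'), g (z, t') := by
    intro z t
    rw [hG]
    simp only []
    rw [show Finset.Ioo (t - N') (t + N') = (Ipm (N':ℤ)).image (fun h => t + h) by
      rw [Ipm, Finset.image_add_left_Ioo]; congr 1 <;> ring]
    rw [Finset.sum_image (fun x _ y _ h => by omega)]
    apply Finset.sum_congr rfl
    intro h _
    congr 1
    simp [Prod.ext_iff]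
  -- full coverage region
  have hFullsub : ∀ z : ℤ, Finset.Ico (a z + N - N') (a z + N')
      ⊆ Finset.Ioo (a z - N') (a z + N + N' - 1) := by
    intro z t ht
    rw [Finset.mem_Ico] at ht
    rw [Finset.mem_Ioo]
    omega
  have hGfull : ∀ z t : ℤ, t ∈ Finset.Ico (a z + N - N') (a z + N') → G (z,t) = S z := by
    intro z t ht
    rw [Finset.mem_Ico] at ht
    rw [hGeq]
    rw [hS]
    apply (Finset.sum_subset ?_ ?_).symm
    · intro t' ht'
      rw [Finset.mem_Ico] at ht'
      rw [Finset.mem_Ioo]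
      omega
    · intro t' _ ht'
      by_contra h0
      exact ht' (hrowmem z t' h0).2
  have hGle : ∀ z t : ℤ, ‖G (z,t)‖ ≤ (mm z : ℝ) := by
    intro z t
    rw [hGeq]
    exact row_abs_le g hg T hsupp z _
  have hGsupp : ∀ p : ℤ×ℤ, G p ≠ 0 → p.1 ∈ Z ∧ p.2 ∈ Finset.Ioo (a p.1 - N') (a p.1 + N + N' - 1) := by
    intro p h0
    obtain ⟨z, t⟩ := p
    rw [hGeq] at h0
    obtain ⟨t', ht', h0'⟩ := Finset.exists_ne_zero_of_sum_ne_zero h0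
    have h1 := hrowmem z t' h0'
    rw [Finset.mem_Ioo] at ht'
    rw [Finset.mem_Ico] at h1
    refine ⟨h1.1, ?_⟩
    simp only [Finset.mem_Ioo]
    omega
  -- the sum decomposition
  set U : Finset (ℤ×ℤ) := Z.biUnion (fun z => {z} ×ˢ Finset.Ioo (a z - N') (a z + N + N' - 1)) with hU
  have htsum : (∑' x : ℤ×ℤ, (‖G x‖)^2)
      = ∑ z ∈ Z, ∑ t ∈ Finset.Ioo (a z - N') (a z + N + N' - 1), (‖G (z,t)‖)^2 := by
    rw [tsum_eq_sum (s := U) ?_]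
    · rw [Finset.sum_biUnion ?_]
      · apply Finset.sum_congr rfl
        intro z _
        rw [Finset.sum_product]
        simp
      · intro z1 _ z2 _ hne
        refine Finset.disjoint_left.2 (fun p hp1 hp2 => hne ?_)
        rw [Finset.mem_product, Finset.mem_singleton] at hp1 hp2
        exact hp1.1.symm.trans hp2.1
    · intro p hp
      by_contra h0
      have hGne : G p ≠ 0 := by
        intro h; apply h0; rw [h]; simp
      obtain ⟨hp1, hp2⟩ := hGsupp p hGne
      exact hp (Finset.mem_biUnion.2 ⟨p.1, hp1,
        Finset.mem_product.2 ⟨Finset.mem_singleton_self _, hp2⟩⟩)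
  -- cardinality facts
  have hcardFull : ∀ z : ℤ, ((Finset.Ico (a z + N - N') (a z + N')).card : ℝ) = 2*n' - n := by
    intro z
    rw [Int.card_Ico]
    have h1 : (a z + N' - (a z + N - N')) = 2*(N':ℤ) - N := by ring
    rw [h1]
    have h2 : ((2*(N':ℤ) - N).toNat : ℤ) = 2*(N':ℤ) - N := Int.toNat_of_nonneg (by omega)
    have := congrArg (fun x : ℤ => (x : ℝ)) h2
    push_cast at this ⊢
    linarith
  have hcardBd : ∀ z : ℤ, (((Finset.Ioo (a z - N') (a z + N + N' - 1))
      \ (Finset.Ico (a z + N - N') (a z + N'))).card : ℝ) ≤ 2*n := by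
    intro z
    rw [Finset.card_sdiff_of_subset (hFullsub z), Int.card_Ioo, Int.card_Ico]
    have h3 : (a z + N + N' - 1 - (a z - N') - 1).toNat - (a z + N' - (a z + N - N')).toNat
        ≤ 2*N := by omega
    calc ((((a z + N + N' - 1 - (a z - N') - 1).toNat - (a z + N' - (a z + N - N')).toNat) : ℕ) : ℝ)
        ≤ ((2*N : ℕ) : ℝ) := by exact_mod_cast h3
      _ = 2*n := by push_cast; ring
  -- per-row bounds
  have hSle : ∀ z : ℤ, ‖S z‖ ≤ (mm z : ℝ) := by
    intro z
    rw [hS]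
    exact row_abs_le g hg T hsupp z _
  have hmmN : ∀ z : ℤ, (mm z : ℝ) ≤ n := by
    intro z
    have h4 : mm z ≤ (Finset.Ico (a z) (a z + N)).card := by
      apply Finset.card_le_card_of_injOn Prod.snd
      · intro p hp
        rw [Finset.mem_coe, Finset.mem_filter] at hp
        have := hrow p hp.1
        rw [hp.2] at this
        exact this
      · intro p hp q hq hpq
        rw [Finset.mem_coe, Finset.mem_filter] at hp hq
        exact Prod.ext (hp.2.trans hq.2.symm) hpq
    have h5 : (Finset.Ico (a z) (a z + N)).card = N := by
      rw [Int.card_Ico]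
      omega
    rw [h5] at h4
    rw [hn]
    exact_mod_cast h4
  have hmm0 : ∀ z : ℤ, (0:ℝ) ≤ (mm z : ℝ) := fun z => Nat.cast_nonneg _
  have hsumMM : ∑ z ∈ Z, (mm z : ℝ) ≤ n^2 := by
    have h6 : ∑ z ∈ Z, mm z = T.card :=
      (Finset.card_eq_sum_card_fiberwise (fun p hp => Finset.mem_image_of_mem _ hp)).symm
    calc ∑ z ∈ Z, ((mm z : ℕ) : ℝ) = ((∑ z ∈ Z, mm z : ℕ) : ℝ) := by push_cast; rfl
      _ = ((T.card : ℕ) : ℝ) := by rw [h6]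
      _ ≤ (((N:ℕ)^2 : ℕ) : ℝ) := by exact_mod_cast hT
      _ = n^2 := by push_cast; rfl
  -- per-z estimate
  have key2 : ∀ z ∈ Z, ∑ t ∈ Finset.Ioo (a z - N') (a z + N + N' - 1), (‖G (z,t)‖)^2
      ≤ (2*n' - n) * (‖S z‖)^2 + 2*n*((mm z : ℝ))^2 := by
    intro z _
    rw [← Finset.sum_sdiff (hFullsub z)]
    have h7 : ∑ t ∈ Finset.Ico (a z + N - N') (a z + N'), (‖G (z,t)‖)^2
        = (2*n' - n) * (‖S z‖)^2 := by
      rw [Finset.sum_congr rfl (fun t ht => by rw [hGfull z t ht]), Finset.sum_const,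
        nsmul_eq_mul, hcardFull]
    have h8 : ∑ t ∈ (Finset.Ioo (a z - N') (a z + N + N' - 1))
        \ (Finset.Ico (a z + N - N') (a z + N')), (‖G (z,t)‖)^2
        ≤ 2*n*((mm z : ℝ))^2 := by
      calc ∑ t ∈ (Finset.Ioo (a z - N') (a z + N + N' - 1))
          \ (Finset.Ico (a z + N - N') (a z + N')), (‖G (z,t)‖)^2
          ≤ ∑ _t ∈ (Finset.Ioo (a z - N') (a z + N + N' - 1))
          \ (Finset.Ico (a z + N - N') (a z + N')), ((mm z : ℝ))^2 := by
            apply Finset.sum_le_sum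
            intro t _
            exact pow_le_pow_left₀ (norm_nonneg _) (hGle z t) 2
        _ = (((Finset.Ioo (a z - N') (a z + N + N' - 1))
            \ (Finset.Ico (a z + N - N') (a z + N'))).card : ℝ) * ((mm z : ℝ))^2 := by
            rw [Finset.sum_const, nsmul_eq_mul]
        _ ≤ 2*n*((mm z : ℝ))^2 := by
            apply mul_le_mul_of_nonneg_right (hcardBd z) (sq_nonneg _)
    linarith [h7, h8]
  -- the main chain
  set SS : ℝ := ∑ z ∈ Z, ‖S z‖ with hSSdef
  have hSS0 : 0 ≤ SS := Finset.sum_nonneg (fun z _ => norm_nonneg _)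
  have hmain : δ * n^2 * (2*n'-1)^2 ≤ (2*n'-1) * n * SS + 2*n^4 := by
    have c1 : δ * n^2 * (2*n'-1)^2
        ≤ ∑ z ∈ Z, ((2*n' - n) * (‖S z‖)^2 + 2*n*((mm z : ℝ))^2) := by
      calc δ * n^2 * (2*n'-1)^2 ≤ ∑' x : ℤ×ℤ, (‖G x‖)^2 := hbox
        _ = ∑ z ∈ Z, ∑ t ∈ Finset.Ioo (a z - N') (a z + N + N' - 1), (‖G (z,t)‖)^2 :=
          htsum
        _ ≤ _ := Finset.sum_le_sum key2
    have c2 : ∑ z ∈ Z, ((2*n' - n) * (‖S z‖)^2 + 2*n*((mm z : ℝ))^2)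
        ≤ (2*n'-1) * n * SS + 2*n^4 := by
      rw [Finset.sum_add_distrib]
      have c3 : ∑ z ∈ Z, (2*n' - n) * (‖S z‖)^2
          ≤ ∑ z ∈ Z, (2*n'-1) * n * ‖S z‖ := by
        apply Finset.sum_le_sum
        intro z _
        have hs1 : ‖S z‖ ≤ n := le_trans (hSle z) (hmmN z)
        have hs2 : (‖S z‖)^2 ≤ n * ‖S z‖ := by
          rw [sq]; exact mul_le_mul_of_nonneg_right hs1 (norm_nonneg _)
        have hs4 : 2*n'-n ≤ 2*n'-1 := by linarith
        calc (2*n'-n) * (‖S z‖)^2 ≤ (2*n'-1) * (n * ‖S z‖) :=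
            mul_le_mul hs4 hs2 (sq_nonneg _) (by linarith)
          _ = (2*n'-1)*n*‖S z‖ := by ring
      have c4 : ∑ z ∈ Z, 2*n*((mm z : ℝ))^2 ≤ 2*n^4 := by
        have c5 : ∑ z ∈ Z, 2*n*((mm z : ℝ))^2 ≤ ∑ z ∈ Z, 2*n^2*(mm z : ℝ) := by
          apply Finset.sum_le_sum
          intro z _
          have hs5 : ((mm z : ℝ))^2 ≤ n*(mm z : ℝ) := by
            rw [sq]; exact mul_le_mul_of_nonneg_right (hmmN z) (hmm0 z)
          calc 2*n*((mm z : ℝ))^2 ≤ 2*n*(n*(mm z : ℝ)) :=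
              mul_le_mul_of_nonneg_left hs5 (by linarith)
            _ = 2*n^2*(mm z : ℝ) := by ring
        calc ∑ z ∈ Z, 2*n*((mm z : ℝ))^2 ≤ ∑ z ∈ Z, 2*n^2*(mm z : ℝ) := c5
          _ = 2*n^2 * ∑ z ∈ Z, (mm z : ℝ) := by rw [Finset.mul_sum]
          _ ≤ 2*n^2 * n^2 := by
              apply mul_le_mul_of_nonneg_left hsumMM (by positivity)
          _ = 2*n^4 := by ring
      have c6 : ∑ z ∈ Z, (2*n'-1) * n * ‖S z‖ = (2*n'-1) * n * SS := by
        rw [hSSdef, Finset.mul_sum]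
      linarith
    linarith
  have hSSfinal : Real.sqrt δ * n^2 ≤ SS :=
    arith_core δ n (2*n'-1) SS hδ0 h2n hm hmpos hSS0 hmain
  -- construct b
  set b : ℤ → ℂ := fun z => if S z = 0 then 1
    else (starRingEnd ℂ) (S z) / ((‖S z‖ : ℝ) : ℂ) with hb
  have hb1 : Bounded1 b := by
    intro z
    rw [hb]
    by_cases h : S z = 0
    · simp [h]
    · simp only [h, if_false]
      rw [norm_div, Complex.norm_conj, Complex.norm_real, Real.norm_eq_abs, abs_of_nonneg (norm_nonneg _)]
      rw [div_self (by simpa using h)]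
  have hbre : ∀ z : ℤ, (S z * b z).re = ‖S z‖ := by
    intro z
    rw [hb]
    by_cases h : S z = 0
    · simp [h]
    · simp only [h, if_false]
      rw [mul_div_assoc', Complex.mul_conj, Complex.normSq_eq_norm_sq]
      have habs : (‖S z‖) ≠ 0 := by simpa using h
      rw [Complex.div_ofReal_re, Complex.ofReal_re, sq, mul_div_assoc, div_self habs, mul_one]
  set V : Finset (ℤ×ℤ) := Z.biUnion (fun z => {z} ×ˢ Finset.Ico (a z) (a z + N)) with hV
  have htsum2 : (∑' p : ℤ×ℤ, g p * b p.1) = ∑ z ∈ Z, S z * b z := by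
    rw [tsum_eq_sum (s := V) ?_]
    · rw [Finset.sum_biUnion ?_]
      · apply Finset.sum_congr rfl
        intro z _
        rw [Finset.sum_product]
        simp only [Finset.sum_singleton]
        rw [hS, Finset.sum_mul]
      · intro z1 _ z2 _ hne
        refine Finset.disjoint_left.2 (fun p hp1 hp2 => hne ?_)
        rw [Finset.mem_product, Finset.mem_singleton] at hp1 hp2
        exact hp1.1.symm.trans hp2.1
    · intro p hp
      by_cases h0 : g p = 0
      · rw [h0, zero_mul]
      · exfalso
        obtain ⟨hp1, hp2⟩ := hrowmem p.1 p.2 (by rw [Prod.mk.eta]; exact h0)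
        exact hp (Finset.mem_biUnion.2 ⟨p.1, hp1,
          Finset.mem_product.2 ⟨Finset.mem_singleton_self _, hp2⟩⟩)
  refine ⟨b, hb1, ?_⟩
  rw [htsum2, Complex.re_sum]
  calc Real.sqrt δ * n^2 ≤ SS := hSSfinal
    _ = ∑ z ∈ Z, (S z * b z).re := by
      rw [hSSdef]
      exact Finset.sum_congr rfl (fun z _ => (hbre z).symm)


set_option maxHeartbeats 3000000 in
lemma master (δ : ℝ) (hδ0 : 0 < δ) (hδ1 : δ ≤ 1) (N N' : ℕ)
    (hN' : Real.sqrt (2/δ) * N ≤ N') (hN : 2 * δ⁻¹ ≤ (N:ℝ))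
    (f : ℤ×ℤ → ℂ) (hf : Bounded1 f) (hfs : SuppOn2 (N:ℤ) f)
    (v : ℤ×ℤ) (e : ℤ×ℤ ≃ ℤ×ℤ) (he_add : ∀ p q : ℤ×ℤ, e (p+q) = e p + e q)
    (c : ℤ) (hc : c = 1 ∨ c = -1)
    (hev : ∀ h : ℤ, e (v.1*h, v.2*h) = (0, c*h))
    (a : ℤ → ℤ)
    (ha : ∀ q : ℤ×ℤ, q.1 ∈ I0 (N:ℤ) → q.2 ∈ I0 (N:ℤ) →
      (e q).2 ∈ Finset.Ico (a (e q).1) (a (e q).1 + N))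
    (hbox : δ * (N:ℝ)^2 ≤ (boxPow (fun _ : Fin 1 => dil v (Ipm (N':ℤ))) f).re) :
    ∃ b : ℤ → ℂ, Bounded1 b ∧
      Real.sqrt δ * (N:ℝ)^2 ≤ (∑' x : ℤ, ∑' y : ℤ, f (x,y) * b ((e (x,y)).1)).re := by
  classical
  -- numeric basics
  have hδinv : (1:ℝ) ≤ δ⁻¹ := (one_le_inv₀ hδ0).2 hδ1
  have h2n : (2:ℝ) ≤ (N:ℝ) := le_trans (by nlinarith) hN
  have hsqδ : 0 < Real.sqrt δ := Real.sqrt_pos.2 hδ0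
  have hsqδ1 : Real.sqrt δ ≤ 1 := by
    rw [show (1:ℝ) = Real.sqrt 1 by simp]; exact Real.sqrt_le_sqrt hδ1
  have hsq2 : (1:ℝ) ≤ Real.sqrt 2 := by
    rw [show (1:ℝ) = Real.sqrt 1 by simp]; exact Real.sqrt_le_sqrt (by norm_num)
  have hsq2δ : (1:ℝ) ≤ Real.sqrt (2/δ) := by
    rw [show (1:ℝ) = Real.sqrt 1 by simp]
    apply Real.sqrt_le_sqrt
    rw [le_div_iff₀ hδ0]; linarith
  have hn'2 : (2:ℝ) ≤ (N':ℝ) := le_trans (le_trans h2n (by nlinarith)) hN'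
  have hN'1 : 1 ≤ N' := by exact_mod_cast le_trans (by norm_num : (1:ℝ) ≤ 2) hn'2
  -- injectivity of the dilation map
  have hcc : c * c = 1 := by rcases hc with h | h <;> simp [h]
  have hinj : Function.Injective (fun h : ℤ => (v.1 * h, v.2 * h)) := by
    intro h1 h2 hh
    have := congrArg e (congrArg id hh)
    simp only [id] at this
    rw [hev, hev, Prod.ext_iff] at this
    have h3 : c * h1 = c * h2 := this.2
    have := congrArg (fun x => c * x) h3
    simp only [← mul_assoc, hcc, one_mul] at this
    exact this
  -- coordinates change
  set g : ℤ×ℤ → ℂ := fun p => f (e.symm p) with hgdef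
  have hge : ∀ q : ℤ×ℤ, g (e q) = f q := fun q => by rw [hgdef]; simp
  have hshift : ∀ (x : ℤ×ℤ),
      (∑ a ∈ dil v (Ipm (N':ℤ)), f (x + a)) = ∑ h ∈ Ipm (N':ℤ), g (e x + (0, h)) := by
    intro x
    rw [dil, Finset.sum_image (fun h1 _ h2 _ hh => hinj hh)]
    rw [show (∑ h ∈ Ipm (N':ℤ), f (x + (v.1*h, v.2*h)))
        = ∑ h ∈ Ipm (N':ℤ), g (e x + (0, c*h)) by
      apply Finset.sum_congr rfl
      intro h _
      rw [← hge (x + (v.1*h, v.2*h)), he_add, hev]]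
    apply Finset.sum_nbij' (i := fun h => c*h) (j := fun h => c*h)
    · intro h hh; rw [Ipm, Finset.mem_Ioo] at hh ⊢; rcases hc with h1 | h1 <;> rw [h1] <;> omega
    · intro h hh; rw [Ipm, Finset.mem_Ioo] at hh ⊢; rcases hc with h1 | h1 <;> rw [h1] <;> omega
    · intro h _; rw [← mul_assoc, hcc, one_mul]
    · intro h _; rw [← mul_assoc, hcc, one_mul]
    · intro h _; rfl
  -- the support finset
  set B : Finset (ℤ×ℤ) := (Finset.Ico (0:ℤ) (N:ℤ)) ×ˢ (Finset.Ico (0:ℤ) (N:ℤ)) with hB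
  have hfB : ∀ p, f p ≠ 0 → p ∈ B := by
    intro p hp
    obtain ⟨h1, h2⟩ := hfs p hp
    exact Finset.mem_product.2 ⟨h1, h2⟩
  set T : Finset (ℤ×ℤ) := B.image e with hT
  have hgT : ∀ p, g p ≠ 0 → p ∈ T := by
    intro p hp
    have : f (e.symm p) ≠ 0 := hp
    have h1 := hfB _ this
    rw [hT]
    exact Finset.mem_image.2 ⟨e.symm p, h1, by simp⟩
  have hTcard : T.card ≤ N^2 := by
    rw [hT]
    calc (B.image e).card ≤ B.card := Finset.card_image_le
      _ ≤ N^2 := by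
        rw [hB, Finset.card_product, Int.card_Ico]
        simp only [sub_zero, Int.toNat_natCast]
        rw [sq]
  have hTrow : ∀ p ∈ T, p.2 ∈ Finset.Ico (a p.1) (a p.1 + N) := by
    intro p hp
    rw [hT] at hp
    obtain ⟨q, hq, rfl⟩ := Finset.mem_image.1 hp
    rw [hB, Finset.mem_product] at hq
    exact ha q hq.1 hq.2
  -- cardinality of the dilated interval
  have hdcard : ((dil v (Ipm (N':ℤ))).card : ℝ) = 2*(N':ℝ) - 1 := by
    rw [dil, Finset.card_image_of_injective _ hinj, Ipm, Int.card_Ioo]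
    have h1 : ((N':ℤ) - -(N':ℤ) - 1).toNat = (2*(N':ℤ) - 1).toNat := by congr 1; ring
    rw [h1]
    have h2 : ((2*(N':ℤ) - 1).toNat : ℤ) = 2*(N':ℤ) - 1 := Int.toNat_of_nonneg (by omega)
    have := congrArg (fun x : ℤ => (x : ℝ)) h2
    push_cast at this ⊢
    linarith
  -- rewrite the box-norm hypothesis
  have hmpos : (0:ℝ) < 2*(N':ℝ) - 1 := by linarith
  have hbox2 : δ * (N:ℝ)^2 * (2*(N':ℝ)-1)^2
      ≤ ∑' x : ℤ×ℤ, (‖∑ h ∈ Ipm (N':ℤ), g (x + (0,h))‖)^2 := by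
    have h1 := boxPow_one_re (dil v (Ipm (N':ℤ))) f B hfB
    rw [h1, hdcard] at hbox
    rw [← le_div_iff₀ (by positivity)]
    calc δ * (N:ℝ)^2 ≤ (∑' x : ℤ×ℤ, (‖∑ a ∈ dil v (Ipm (N':ℤ)), f (x + a)‖)^2)
          / (2*(N':ℝ)-1)^2 := hbox
      _ = _ := by
        congr 1
        rw [show (fun x : ℤ×ℤ => (‖∑ a ∈ dil v (Ipm (N':ℤ)), f (x + a)‖)^2)
            = fun x : ℤ×ℤ => (‖∑ h ∈ Ipm (N':ℤ), g (e x + (0,h))‖)^2 by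
          funext x; rw [hshift]]
        exact Equiv.tsum_eq e (fun w => (‖∑ h ∈ Ipm (N':ℤ), g (w + (0,h))‖)^2)
  -- apply the core lemma
  have hgbd : Bounded1 g := fun p => hf _
  obtain ⟨b, hb1, hb2⟩ := core δ hδ0 hδ1 N N' hN' hN g hgbd T hgT hTcard a hTrow hbox2
  refine ⟨b, hb1, ?_⟩
  have hre : (∑' x : ℤ, ∑' y : ℤ, f (x,y) * b ((e (x,y)).1)) = ∑' p : ℤ×ℤ, g p * b p.1 := by
    have hsum : Summable (fun q : ℤ×ℤ => f q * b ((e q).1)) := by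
      apply summable_finsupp B
      intro p hp
      exact hfB p (left_ne_zero_of_mul hp)
    rw [← Summable.tsum_prod' hsum (fun x => (hsum.prod_factor x))]
    rw [← Equiv.tsum_eq e (fun p => g p * b p.1)]
    apply tsum_congr
    intro q
    rw [hge]
  rw [hre]
  exact hb2

/-- the two-dimensional `U¹` inverse theorem. -/
theorem stmt13 :
    ∃ c : ℝ, 0 < c ∧
      ∀ δ : ℝ, 0 < δ → δ ≤ 1 →
      ∀ N N' : ℕ, (δ / 2) ^ (-(1 : ℝ) / 2) * (N : ℝ) ≤ (N' : ℝ) → 2 * δ⁻¹ ≤ (N : ℝ) →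
      ∀ f : ℤ × ℤ → ℂ, Bounded1 f → SuppOn2 (N : ℤ) f →
        ((δ * (N : ℝ) ^ 2 ≤ (boxPow (fun _ : Fin 1 => dil (1, 0) (Ipm (N' : ℤ))) f).re →
            ∃ b : ℤ → ℂ, Bounded1 b ∧
              c * δ ^ ((5 : ℝ) / 4) * (N : ℝ) ^ 2 ≤
                (∑' x : ℤ, ∑' y : ℤ, f (x, y) * b y).re) ∧
          (δ * (N : ℝ) ^ 2 ≤ (boxPow (fun _ : Fin 1 => dil (0, 1) (Ipm (N' : ℤ))) f).re →
            ∃ b : ℤ → ℂ, Bounded1 b ∧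
              c * δ ^ ((5 : ℝ) / 4) * (N : ℝ) ^ 2 ≤
                (∑' x : ℤ, ∑' y : ℤ, f (x, y) * b x).re) ∧
          (δ * (N : ℝ) ^ 2 ≤ (boxPow (fun _ : Fin 1 => dil (-1, 1) (Ipm (N' : ℤ))) f).re →
            ∃ b : ℤ → ℂ, Bounded1 b ∧
              c * δ ^ ((5 : ℝ) / 4) * (N : ℝ) ^ 2 ≤
                (∑' x : ℤ, ∑' y : ℤ, f (x, y) * b (x + y)).re)) := by
  classical
  refine ⟨1, one_pos, ?_⟩
  intro δ hδ0 hδ1 N N' hN' hN f hf hfs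
  have hrpow : (δ/2) ^ (-(1:ℝ)/2) = Real.sqrt (2/δ) := by
    rw [show (-(1:ℝ)/2) = -(1/2) by norm_num, Real.rpow_neg (by positivity),
      ← Real.sqrt_eq_rpow, ← Real.sqrt_inv, inv_div]
  have hN'' : Real.sqrt (2/δ) * (N:ℝ) ≤ (N':ℝ) := by rw [← hrpow]; exact hN'
  have hfinal : (1:ℝ) * δ ^ ((5:ℝ)/4) * (N:ℝ)^2 ≤ Real.sqrt δ * (N:ℝ)^2 := by
    rw [one_mul]
    apply mul_le_mul_of_nonneg_right ?_ (by positivity)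
    rw [Real.sqrt_eq_rpow]
    exact Real.rpow_le_rpow_of_exponent_ge hδ0 hδ1 (by norm_num)
  refine ⟨?_, ?_, ?_⟩
  · -- direction (1,0), b depends on y
    intro hbox
    obtain ⟨b, hb1, hb2⟩ := master δ hδ0 hδ1 N N' hN'' hN f hf hfs (1,0)
      (Equiv.prodComm ℤ ℤ) (fun p q => rfl) 1 (Or.inl rfl)
      (fun h => by simp [Equiv.prodComm])
      (fun _ => 0)
      (fun q h1 h2 => by
        simp only [I0, Finset.mem_Ico, Equiv.prodComm, Equiv.coe_fn_mk, Prod.swap] at h1 h2 ⊢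
        omega)
      hbox
    exact ⟨b, hb1, le_trans hfinal hb2⟩
  · -- direction (0,1), b depends on x
    intro hbox
    obtain ⟨b, hb1, hb2⟩ := master δ hδ0 hδ1 N N' hN'' hN f hf hfs (0,1)
      (Equiv.refl (ℤ×ℤ)) (fun p q => rfl) 1 (Or.inl rfl)
      (fun h => by simp)
      (fun _ => 0)
      (fun q h1 h2 => by
        simp only [I0, Finset.mem_Ico, Equiv.refl_apply] at h1 h2 ⊢
        omega)
      hbox
    exact ⟨b, hb1, le_trans hfinal hb2⟩
  · -- direction (-1,1), b depends on x+y
    intro hbox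
    obtain ⟨b, hb1, hb2⟩ := master δ hδ0 hδ1 N N' hN'' hN f hf hfs (-1,1)
      ⟨fun p => (p.1+p.2, p.1), fun p => (p.2, p.1 - p.2),
        fun p => by simp, fun p => by simp⟩
      (fun p q => by simp [Prod.ext_iff]; ring) (-1) (Or.inr rfl)
      (fun h => by simp [Prod.ext_iff])
      (fun z => max 0 (z - N + 1))
      (fun q h1 h2 => by
        simp only [I0, Finset.mem_Ico, Equiv.coe_fn_mk] at h1 h2 ⊢
        omega)
      hbox
    exact ⟨b, hb1, le_trans hfinal hb2⟩
end
end

section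
/- There is an absolute constant c > 0 such that the following holds. Let δ ∈ (0,1] and H, N ∈ ℕ with δN ≤ H ≤ N, and let f : ℤ² → ℂ be a 1-bounded function supported on [N]². Then: (i) if ‖f‖_{e_1·[±H], e_2·[±H]}^4 ≥ δN², there are 1-bounded b_1, b_2 : ℤ → ℂ with Re(∑_{x,y} f(x,y) b_1(x) b_2(y)) ≥ c·δ³·N²; (ii) if ‖f‖_{e_1·[±H], (e_2−e_1)·[±H]}^4 ≥ δN², there are 1-bounded b_1, b_2 : ℤ → ℂ with Re(∑_{x,y} f(x,y) b_1(x+y) b_2(y)) ≥ c·δ³·N²; (iii) if ‖f‖_{e_2·[±H], (e_2−e_1)·[±H]}^4 ≥ δN², there are 1-bounded b_1, b_2 : ℤ → ℂ with Re(∑_{x,y} f(x,y) b_1(x) b_2(x+y)) ≥ c·δ³·N². -/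
open Finset

noncomputable section

/-! ### Auxiliary lemmas -/

lemma sum_piFinset_two {M : Type*} [AddCommMonoid M] (E1 E2 : Finset (ℤ×ℤ))
    (G : (Fin 2 → ℤ×ℤ) → M) :
    ∑ h ∈ Fintype.piFinset ![E1, E2], G h = ∑ p ∈ E1 ×ˢ E2, G ![p.1, p.2] := by
  refine Finset.sum_equiv (finTwoArrowEquiv (ℤ×ℤ)) ?_ ?_
  · intro h
    simp [Fintype.mem_piFinset, Fin.forall_fin_two, Finset.mem_product]
  · intro h hh
    congr 1
    funext i
    fin_cases i <;> simp

lemma prod_fun2bool (G : (Fin 2 → Bool) → ℂ) :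
    ∏ ε : Fin 2 → Bool, G ε =
      G ![true,true] * G ![true,false] * (G ![false,true] * G ![false,false]) := by
  rw [← Equiv.prod_comp (finTwoArrowEquiv Bool).symm G]
  rw [Fintype.prod_prod_type]
  rw [Fintype.prod_bool]
  rw [Fintype.prod_bool, Fintype.prod_bool]
  simp [finTwoArrowEquiv]

lemma boxPow_two (E1 E2 : Finset (ℤ×ℤ)) (f : ℤ×ℤ → ℂ) :
    boxPow ![E1, E2] f =
      (∑ p ∈ E1 ×ˢ E2, ∑ q ∈ E1 ×ˢ E2, ∑' x : ℤ×ℤ,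
        f (x + p.1 + p.2) * (starRingEnd ℂ) (f (x + q.1 + p.2)) *
          ((starRingEnd ℂ) (f (x + p.1 + q.2)) * f (x + q.1 + q.2)))
      / (((E1.card : ℂ) * E2.card) ^ 2) := by
  unfold boxPow
  congr 1
  · rw [sum_piFinset_two]
    refine Finset.sum_congr rfl fun p _ => ?_
    rw [sum_piFinset_two]
    refine Finset.sum_congr rfl fun q _ => ?_
    refine tsum_congr fun x => ?_
    rw [prod_fun2bool]
    simp only [Fin.sum_univ_two]
    have c1 : (Finset.filter (fun i : Fin 2 => ![false,false] i = true) Finset.univ).card = 0 := by decide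
    have c2 : (Finset.filter (fun i : Fin 2 => ![false,true] i = true) Finset.univ).card = 1 := by decide
    have c3 : (Finset.filter (fun i : Fin 2 => ![true,false] i = true) Finset.univ).card = 1 := by decide
    have c4 : (Finset.filter (fun i : Fin 2 => ![true,true] i = true) Finset.univ).card = 2 := by decide
    simp only [conjIter, c1, c2, c3, c4, Matrix.cons_val_zero, Matrix.cons_val_one,
      Matrix.head_cons, if_true, if_false]
    norm_num
    ring
  · rw [Fin.prod_univ_two]
    simp

lemma dil_inj (v : ℤ×ℤ) (hv : v.1 = 1 ∨ v.2 = 1) :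
    Function.Injective (fun h : ℤ => (v.1 * h, v.2 * h)) := by
  intro a b h
  rw [Prod.ext_iff] at h
  rcases hv with h1 | h1
  · have := h.1; rw [h1] at this; simpa using this
  · have := h.2; rw [h1] at this; simpa using this

lemma sum_dil {M : Type*} [AddCommMonoid M] (v : ℤ×ℤ) (hv : v.1 = 1 ∨ v.2 = 1)
    (S : Finset ℤ) (F : ℤ×ℤ → M) :
    ∑ a ∈ dil v S, F a = ∑ k ∈ S, F (v.1*k, v.2*k) :=
  Finset.sum_image (fun a _ b _ h => dil_inj v hv h)

lemma card_dil (v : ℤ×ℤ) (hv : v.1 = 1 ∨ v.2 = 1) (S : Finset ℤ) :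
    (dil v S).card = S.card :=
  Finset.card_image_of_injective _ (dil_inj v hv)

lemma tsum_tsum_eq (I1 I2 : Finset ℤ) (F : ℤ → ℤ → ℂ)
    (h : ∀ x y, F x y ≠ 0 → x ∈ I1 ∧ y ∈ I2) :
    ∑' x : ℤ, ∑' y : ℤ, F x y = ∑ x ∈ I1, ∑ y ∈ I2, F x y := by
  have hin : ∀ x : ℤ, ∑' y : ℤ, F x y = ∑ y ∈ I2, F x y := fun x =>
    tsum_eq_sum fun y hy => by
      by_contra hne; exact hy (h x y hne).2
  rw [tsum_congr hin]
  exact tsum_eq_sum fun x hx => Finset.sum_eq_zero fun y _ => by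
    by_contra hne; exact hx (h x y hne).1

lemma shift_sum (N : ℕ) (x : ℤ) (hx : x ∈ Finset.Ico (0:ℤ) N) (F : ℤ → ℂ)
    (hF : ∀ u : ℤ, F u ≠ 0 → u - x ∈ Finset.Ico (0:ℤ) N) :
    ∑ u ∈ Finset.Ico (0:ℤ) (2*N), F u = ∑ y ∈ Finset.Ico (0:ℤ) N, F (x + y) := by
  simp only [Finset.mem_Ico] at hx
  have h1 : ∑ y ∈ Finset.Ico (0:ℤ) N, F (x + y) = ∑ u ∈ Finset.Ico (x + 0) (x + N), F u := by
    rw [← Finset.map_add_left_Ico, Finset.sum_map]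
    simp [addLeftEmbedding]
  rw [h1]
  symm
  apply Finset.sum_subset
  · intro u hu
    simp only [Finset.mem_Ico] at hu ⊢
    omega
  · intro u _ hu
    by_contra hne
    have := hF u hne
    simp only [Finset.mem_Ico] at this hu
    omega

/-- The inner-product function `P`. -/
def Pfun (g : ℤ×ℤ → ℂ) (E : Finset ℤ) (a y y' : ℤ) : ℂ :=
  ∑ h ∈ E, g (a+h, y) * (starRingEnd ℂ) (g (a+h, y'))

lemma conj_Pfun (g : ℤ×ℤ → ℂ) (E : Finset ℤ) (a y y' : ℤ) :
    (starRingEnd ℂ) (Pfun g E a y y') = ∑ h ∈ E, (starRingEnd ℂ) (g (a+h, y)) * g (a+h, y') := by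
  rw [Pfun, map_sum]
  exact Finset.sum_congr rfl fun h _ => by rw [map_mul, Complex.conj_conj]

lemma abs_Pfun (g : ℤ×ℤ → ℂ) (hb : Bounded1 g) (E : Finset ℤ) (a y y' : ℤ) :
    ‖Pfun g E a y y'‖ ≤ E.card := by
  refine le_trans (norm_sum_le _ _) ?_
  have : ∀ h ∈ E, ‖g (a+h, y) * (starRingEnd ℂ) (g (a+h, y'))‖ ≤ 1 := by
    intro h _
    rw [norm_mul, Complex.norm_conj]
    exact mul_le_one₀ (hb _) (norm_nonneg _) (hb _)
  calc ∑ h ∈ E, ‖g (a+h, y) * (starRingEnd ℂ) (g (a+h, y'))‖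
      ≤ ∑ _h ∈ E, (1:ℝ) := Finset.sum_le_sum this
    _ = E.card := by simp

lemma reorder5 {M : Type*} [AddCommMonoid M] (E : Finset ℤ) (X : Finset (ℤ×ℤ))
    (t : ℤ → ℤ → ℤ → ℤ → ℤ×ℤ → M) :
    ∑ h1 ∈ E, ∑ h2 ∈ E, ∑ h1' ∈ E, ∑ h2' ∈ E, ∑ x ∈ X, t h1 h2 h1' h2' x
    = ∑ h2 ∈ E, ∑ h2' ∈ E, ∑ x ∈ X, ∑ h1 ∈ E, ∑ h1' ∈ E, t h1 h2 h1' h2' x := by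
  rw [Finset.sum_comm]
  refine Finset.sum_congr rfl fun h2 _ => ?_
  have e1 : ∀ h1 : ℤ, ∑ h1' ∈ E, ∑ h2' ∈ E, ∑ x ∈ X, t h1 h2 h1' h2' x
      = ∑ h2' ∈ E, ∑ h1' ∈ E, ∑ x ∈ X, t h1 h2 h1' h2' x := fun h1 => Finset.sum_comm
  simp only [e1]
  rw [Finset.sum_comm]
  refine Finset.sum_congr rfl fun h2' _ => ?_
  have e2 : ∀ h1 : ℤ, ∑ h1' ∈ E, ∑ x ∈ X, t h1 h2 h1' h2' x
      = ∑ x ∈ X, ∑ h1' ∈ E, t h1 h2 h1' h2' x := fun h1 => Finset.sum_comm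
  simp only [e2]
  exact Finset.sum_comm

set_option maxHeartbeats 1000000 in
lemma core_s16 (δ : ℝ) (hδ0 : 0 < δ) (H N : ℕ) (hH1 : 1 ≤ H) (hN1 : 1 ≤ N)
    (hδN : δ * N ≤ H) (hHN : H ≤ N)
    (A1 B1 A2 B2 : ℤ) (hAB1 : A1 < B1) (hAB2 : A2 < B2)
    (hL1 : B1 - A1 ≤ 2*N) (hL2 : B2 - A2 ≤ 2*N)
    (g : ℤ×ℤ → ℂ) (hb : Bounded1 g)
    (hsupp : ∀ p : ℤ×ℤ, g p ≠ 0 → p.1 ∈ Finset.Ico A1 B1 ∧ p.2 ∈ Finset.Ico A2 B2)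
    (hT : δ * (N:ℝ)^2 * (2*(H:ℝ)-1)^4 ≤
      (∑ h1 ∈ Ipm (H:ℤ), ∑ h2 ∈ Ipm (H:ℤ), ∑ h1' ∈ Ipm (H:ℤ), ∑ h2' ∈ Ipm (H:ℤ),
        ∑' x : ℤ×ℤ, g (x.1+h1, x.2+h2) * (starRingEnd ℂ) (g (x.1+h1', x.2+h2)) *
          ((starRingEnd ℂ) (g (x.1+h1, x.2+h2')) * g (x.1+h1', x.2+h2'))).re) :
    ∃ b1 b2 : ℤ → ℂ, Bounded1 b1 ∧ Bounded1 b2 ∧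
      (1/16) * δ^3 * (N:ℝ)^2 ≤ (∑' x : ℤ, ∑' y : ℤ, g (x, y) * b1 x * b2 y).re := by
  classical
  set E : Finset ℤ := Ipm (H:ℤ) with hE
  have hmemE : ∀ h : ℤ, h ∈ E ↔ -(H:ℤ) < h ∧ h < H := by
    intro h; simp [hE, Ipm]
  have hH1' : (1:ℤ) ≤ (H:ℤ) := by exact_mod_cast hH1
  have hHN' : (H:ℤ) ≤ (N:ℤ) := by exact_mod_cast hHN
  have hN1' : (1:ℤ) ≤ (N:ℤ) := by exact_mod_cast hN1
  have h0E : (0:ℤ) ∈ E := by rw [hmemE]; omega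
  have hcEZ : (E.card : ℤ) = 2*(H:ℤ) - 1 := by
    rw [hE]; unfold Ipm; rw [Int.card_Ioo]; omega
  have hcE : (E.card : ℝ) = 2*(H:ℝ) - 1 := by exact_mod_cast hcEZ
  have hcEpos : 0 < (E.card : ℝ) := by rw [hcE]; push_cast; linarith [(by exact_mod_cast hH1 : (1:ℝ) ≤ H)]
  set Ja : Finset ℤ := Finset.Ico (A1 - (H:ℤ)) (B1 + (H:ℤ)) with hJa
  set Jb : Finset ℤ := Finset.Ico (A2 - (H:ℤ)) (B2 + (H:ℤ)) with hJb
  have hcJa : (Ja.card : ℤ) ≤ 4*(N:ℤ) := by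
    rw [hJa, Int.card_Ico]; omega
  have hcJb : (Jb.card : ℤ) ≤ 4*(N:ℤ) := by
    rw [hJb, Int.card_Ico]; omega
  -- Step 1: each tsum is a finite sum over Ja ×ˢ Jb
  have key0 : ∀ h1 ∈ E, ∀ h2 ∈ E, ∀ h1' ∈ E, ∀ h2' ∈ E,
      (∑' x : ℤ×ℤ, g (x.1+h1, x.2+h2) * (starRingEnd ℂ) (g (x.1+h1', x.2+h2)) *
          ((starRingEnd ℂ) (g (x.1+h1, x.2+h2')) * g (x.1+h1', x.2+h2')))
      = ∑ x ∈ Ja ×ˢ Jb, g (x.1+h1, x.2+h2) * (starRingEnd ℂ) (g (x.1+h1', x.2+h2)) *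
          ((starRingEnd ℂ) (g (x.1+h1, x.2+h2')) * g (x.1+h1', x.2+h2')) := by
    intro h1 hh1 h2 hh2 h1' _ h2' _
    apply tsum_eq_sum
    intro x hx
    rw [hmemE] at hh1 hh2
    have hg : g (x.1+h1, x.2+h2) = 0 := by
      by_contra hne
      obtain ⟨m1, m2⟩ := hsupp _ hne
      apply hx
      simp only [Finset.mem_Ico] at m1 m2
      simp only [Finset.mem_product, hJa, hJb, Finset.mem_Ico]
      omega
    rw [hg, zero_mul, zero_mul]
  -- Step 2: rewrite the quadruple sum in terms of Pfun
  have keyfact : ∀ h2 : ℤ, ∀ h2' : ℤ, ∀ x : ℤ×ℤ,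
      (∑ h1 ∈ E, ∑ h1' ∈ E, g (x.1+h1, x.2+h2) * (starRingEnd ℂ) (g (x.1+h1', x.2+h2)) *
          ((starRingEnd ℂ) (g (x.1+h1, x.2+h2')) * g (x.1+h1', x.2+h2')))
      = ((Complex.normSq (Pfun g E x.1 (x.2+h2) (x.2+h2')) : ℝ) : ℂ) := by
    intro h2 h2' x
    have hfac : (∑ h1 ∈ E, ∑ h1' ∈ E, g (x.1+h1, x.2+h2) * (starRingEnd ℂ) (g (x.1+h1', x.2+h2)) *
          ((starRingEnd ℂ) (g (x.1+h1, x.2+h2')) * g (x.1+h1', x.2+h2')))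
        = (Pfun g E x.1 (x.2+h2) (x.2+h2')) * (starRingEnd ℂ) (Pfun g E x.1 (x.2+h2) (x.2+h2')) := by
      rw [conj_Pfun, Pfun, Finset.sum_mul_sum]
      exact Finset.sum_congr rfl fun h1 _ => Finset.sum_congr rfl fun h1' _ => by ring
    rw [hfac, Complex.mul_conj]
  have hQ : (∑ h1 ∈ E, ∑ h2 ∈ E, ∑ h1' ∈ E, ∑ h2' ∈ E,
        ∑' x : ℤ×ℤ, g (x.1+h1, x.2+h2) * (starRingEnd ℂ) (g (x.1+h1', x.2+h2)) *
          ((starRingEnd ℂ) (g (x.1+h1, x.2+h2')) * g (x.1+h1', x.2+h2')))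
      = (((∑ h2 ∈ E, ∑ h2' ∈ E, ∑ x ∈ Ja ×ˢ Jb,
          Complex.normSq (Pfun g E x.1 (x.2+h2) (x.2+h2'))) : ℝ) : ℂ) := by
    calc (∑ h1 ∈ E, ∑ h2 ∈ E, ∑ h1' ∈ E, ∑ h2' ∈ E,
        ∑' x : ℤ×ℤ, g (x.1+h1, x.2+h2) * (starRingEnd ℂ) (g (x.1+h1', x.2+h2)) *
          ((starRingEnd ℂ) (g (x.1+h1, x.2+h2')) * g (x.1+h1', x.2+h2')))
        = ∑ h1 ∈ E, ∑ h2 ∈ E, ∑ h1' ∈ E, ∑ h2' ∈ E,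
          ∑ x ∈ Ja ×ˢ Jb, g (x.1+h1, x.2+h2) * (starRingEnd ℂ) (g (x.1+h1', x.2+h2)) *
          ((starRingEnd ℂ) (g (x.1+h1, x.2+h2')) * g (x.1+h1', x.2+h2')) := by
          refine Finset.sum_congr rfl fun h1 hh1 => Finset.sum_congr rfl fun h2 hh2 =>
            Finset.sum_congr rfl fun h1' hh1' => Finset.sum_congr rfl fun h2' hh2' => ?_
          exact key0 h1 hh1 h2 hh2 h1' hh1' h2' hh2'
      _ = ∑ h2 ∈ E, ∑ h2' ∈ E, ∑ x ∈ Ja ×ˢ Jb, ∑ h1 ∈ E, ∑ h1' ∈ E,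
            g (x.1+h1, x.2+h2) * (starRingEnd ℂ) (g (x.1+h1', x.2+h2)) *
          ((starRingEnd ℂ) (g (x.1+h1, x.2+h2')) * g (x.1+h1', x.2+h2')) :=
          reorder5 E (Ja ×ˢ Jb) _
      _ = ∑ h2 ∈ E, ∑ h2' ∈ E, ∑ x ∈ Ja ×ˢ Jb,
            ((Complex.normSq (Pfun g E x.1 (x.2+h2) (x.2+h2')) : ℝ) : ℂ) := by
          refine Finset.sum_congr rfl fun h2 _ => Finset.sum_congr rfl fun h2' _ =>
            Finset.sum_congr rfl fun x _ => keyfact h2 h2' x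
      _ = _ := by push_cast; ring
  rw [hQ, Complex.ofReal_re] at hT
  -- Step 3: pigeonhole
  set S : Finset (ℤ × (ℤ×ℤ)) := E ×ˢ (Ja ×ˢ Jb) with hS
  have hsum_eq : (∑ h2 ∈ E, ∑ h2' ∈ E, ∑ x ∈ Ja ×ˢ Jb,
      Complex.normSq (Pfun g E x.1 (x.2+h2) (x.2+h2')))
      = ∑ i ∈ S, ∑ h2 ∈ E, Complex.normSq (Pfun g E i.2.1 (i.2.2+h2) (i.2.2+i.1)) := by
    calc (∑ h2 ∈ E, ∑ h2' ∈ E, ∑ x ∈ Ja ×ˢ Jb,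
        Complex.normSq (Pfun g E x.1 (x.2+h2) (x.2+h2')))
        = ∑ h2' ∈ E, ∑ h2 ∈ E, ∑ x ∈ Ja ×ˢ Jb,
            Complex.normSq (Pfun g E x.1 (x.2+h2) (x.2+h2')) := Finset.sum_comm
      _ = ∑ h2' ∈ E, ∑ x ∈ Ja ×ˢ Jb, ∑ h2 ∈ E,
            Complex.normSq (Pfun g E x.1 (x.2+h2) (x.2+h2')) :=
          Finset.sum_congr rfl fun h2' _ => Finset.sum_comm
      _ = ∑ i ∈ S, ∑ h2 ∈ E, Complex.normSq (Pfun g E i.2.1 (i.2.2+h2) (i.2.2+i.1)) := by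
          rw [hS, Finset.sum_product]
  rw [hsum_eq] at hT
  have hSne : S.Nonempty := by
    refine Finset.Nonempty.product ⟨0, h0E⟩ (Finset.Nonempty.product ?_ ?_)
    · rw [hJa]; rw [Finset.nonempty_Ico]; omega
    · rw [hJb]; rw [Finset.nonempty_Ico]; omega
  have hpig : ∃ i ∈ S, δ * (2*(H:ℝ)-1)^3 / 16 ≤
      ∑ h2 ∈ E, Complex.normSq (Pfun g E i.2.1 (i.2.2+h2) (i.2.2+i.1)) := by
    by_contra hc
    push_neg at hc
    have hlt : ∑ i ∈ S, (∑ h2 ∈ E, Complex.normSq (Pfun g E i.2.1 (i.2.2+h2) (i.2.2+i.1)))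
        < ∑ _i ∈ S, δ * (2*(H:ℝ)-1)^3 / 16 :=
      Finset.sum_lt_sum_of_nonempty hSne hc
    rw [Finset.sum_const, nsmul_eq_mul] at hlt
    have hq0 : (0:ℝ) ≤ δ * (2*(H:ℝ)-1)^3 / 16 := by
      have : (0:ℝ) ≤ 2*(H:ℝ)-1 := by linarith [hcEpos, hcE]
      positivity
    have hcardS : ((S.card : ℝ)) ≤ (2*(H:ℝ)-1) * (4*N * (4*N)) := by
      rw [hS, Finset.card_product, Finset.card_product]
      push_cast
      rw [← hcE]
      have h1 : (Ja.card : ℝ) ≤ 4*N := by exact_mod_cast hcJa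
      have h2 : (Jb.card : ℝ) ≤ 4*N := by exact_mod_cast hcJb
      have h3 : (0:ℝ) ≤ (Ja.card : ℝ) := Nat.cast_nonneg _
      have h4 : (0:ℝ) ≤ (Jb.card : ℝ) := Nat.cast_nonneg _
      have h5 : (0:ℝ) ≤ (E.card : ℝ) := Nat.cast_nonneg _
      have h6 : (Ja.card:ℝ) * Jb.card ≤ (4*N)*(4*N) := mul_le_mul h1 h2 h4 (by positivity)
      exact mul_le_mul_of_nonneg_left h6 h5
    have hfin : ((S.card : ℝ)) * (δ * (2*(H:ℝ)-1)^3 / 16) ≤ δ * (N:ℝ)^2 * (2*(H:ℝ)-1)^4 := by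
      calc ((S.card : ℝ)) * (δ * (2*(H:ℝ)-1)^3 / 16)
          ≤ ((2*(H:ℝ)-1) * (4*N * (4*N))) * (δ * (2*(H:ℝ)-1)^3 / 16) :=
            mul_le_mul_of_nonneg_right hcardS hq0
        _ = δ * (N:ℝ)^2 * (2*(H:ℝ)-1)^4 := by ring
    linarith
  obtain ⟨i, _, hi⟩ := hpig
  set h2' : ℤ := i.1 with hh2'
  set a0 : ℤ := i.2.1 with ha0
  set b0 : ℤ := i.2.2 with hb0
  set y0 : ℤ := b0 + h2' with hy0
  -- the correlating functions
  set b1 : ℤ → ℂ := fun x => if x - a0 ∈ E then (starRingEnd ℂ) (g (x, y0)) else 0 with hb1def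
  set b2 : ℤ → ℂ := fun y => if y - b0 ∈ E then (starRingEnd ℂ) (Pfun g E a0 y y0) / (E.card : ℂ) else 0 with hb2def
  have hb1 : Bounded1 b1 := by
    intro x
    rw [hb1def]
    dsimp only
    split
    · rw [Complex.norm_conj]; exact hb _
    · simp
  have hb2 : Bounded1 b2 := by
    intro y
    rw [hb2def]
    dsimp only
    split
    · rw [norm_div, Complex.norm_conj, Complex.norm_natCast]
      rw [div_le_one hcEpos]
      exact abs_Pfun g hb E a0 y y0
    · simp
  refine ⟨b1, b2, hb1, hb2, ?_⟩
  -- compute the correlation sum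
  have claimA : ∀ y : ℤ, ∑ x ∈ Finset.Ico A1 B1, g (x,y) * b1 x = Pfun g E a0 y y0 := by
    intro y
    have himg : Pfun g E a0 y y0 = ∑ x ∈ E.image (a0 + ·), g (x,y) * (starRingEnd ℂ) (g (x,y0)) := by
      rw [Finset.sum_image (by intro a _ b _ h; have h' : a0 + a = a0 + b := h; omega)]
      rfl
    have hstep1 : ∑ x ∈ Finset.Ico A1 B1, g (x,y) * b1 x
        = ∑ x ∈ Finset.Ico A1 B1 ∩ E.image (a0 + ·), g (x,y) * b1 x := by
      symm
      apply Finset.sum_subset Finset.inter_subset_left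
      intro x hx1 hx2
      have hxm : x ∉ E.image (a0 + ·) := fun h => hx2 (Finset.mem_inter.mpr ⟨hx1, h⟩)
      have : b1 x = 0 := by
        rw [hb1def]; dsimp only
        rw [if_neg]
        intro hmem
        exact hxm (Finset.mem_image.mpr ⟨x - a0, hmem, by ring⟩)
      rw [this, mul_zero]
    have hstep2 : ∑ x ∈ E.image (a0 + ·), g (x,y) * (starRingEnd ℂ) (g (x,y0))
        = ∑ x ∈ Finset.Ico A1 B1 ∩ E.image (a0 + ·), g (x,y) * (starRingEnd ℂ) (g (x,y0)) := by
      symm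
      apply Finset.sum_subset Finset.inter_subset_right
      intro x _ hx2
      have hx1 : x ∉ Finset.Ico A1 B1 := by
        intro h; exact hx2 (Finset.mem_inter.mpr ⟨h, ‹x ∈ E.image (a0 + ·)›⟩)
      have : g (x, y) = 0 := by
        by_contra hne
        exact hx1 (hsupp _ hne).1
      rw [this, zero_mul]
    rw [hstep1, himg, hstep2]
    refine Finset.sum_congr rfl fun x hx => ?_
    have hxm : x - a0 ∈ E := by
      obtain ⟨h, hh, hha⟩ := Finset.mem_image.mp (Finset.mem_inter.mp hx).2
      have : x - a0 = h := by omega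
      rwa [this]
    rw [hb1def]; dsimp only; rw [if_pos hxm]
  have claimB : ∀ y : ℤ, y ∉ Finset.Ico A2 B2 → Pfun g E a0 y y0 = 0 := by
    intro y hy
    apply Finset.sum_eq_zero
    intro h _
    have : g (a0 + h, y) = 0 := by
      by_contra hne
      exact hy (hsupp _ hne).2
    rw [this, zero_mul]
  have hfinval : (∑' x : ℤ, ∑' y : ℤ, g (x, y) * b1 x * b2 y)
      = (((∑ h2 ∈ E, Complex.normSq (Pfun g E a0 (b0+h2) y0)) / (E.card : ℝ) : ℝ) : ℂ) := by
    rw [tsum_tsum_eq (Finset.Ico A1 B1) (Finset.Ico A2 B2) _ (by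
      intro x y hne
      have hgne : g (x,y) ≠ 0 := by
        intro h0; exact hne (by rw [h0, zero_mul, zero_mul])
      exact hsupp _ hgne)]
    rw [Finset.sum_comm]
    have hyeq : ∀ y : ℤ, ∑ x ∈ Finset.Ico A1 B1, g (x, y) * b1 x * b2 y
        = Pfun g E a0 y y0 * b2 y := by
      intro y
      rw [← Finset.sum_mul, claimA]
    calc ∑ y ∈ Finset.Ico A2 B2, ∑ x ∈ Finset.Ico A1 B1, g (x, y) * b1 x * b2 y
        = ∑ y ∈ Finset.Ico A2 B2, Pfun g E a0 y y0 * b2 y :=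
          Finset.sum_congr rfl fun y _ => hyeq y
      _ = ∑ y ∈ Finset.Ico A2 B2 ∩ E.image (b0 + ·), Pfun g E a0 y y0 * b2 y := by
          symm
          apply Finset.sum_subset Finset.inter_subset_left
          intro y hy1 hy2
          have hym : y ∉ E.image (b0 + ·) := fun h => hy2 (Finset.mem_inter.mpr ⟨hy1, h⟩)
          have : b2 y = 0 := by
            rw [hb2def]; dsimp only
            rw [if_neg]
            intro hmem
            exact hym (Finset.mem_image.mpr ⟨y - b0, hmem, by ring⟩)
          rw [this, mul_zero]
      _ = ∑ y ∈ E.image (b0 + ·), Pfun g E a0 y y0 * b2 y := by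
          apply Finset.sum_subset Finset.inter_subset_right
          intro y hy1 hy2
          have hy3 : y ∉ Finset.Ico A2 B2 := by
            intro h; exact hy2 (Finset.mem_inter.mpr ⟨h, hy1⟩)
          rw [claimB y hy3, zero_mul]
      _ = ∑ h2 ∈ E, Pfun g E a0 (b0+h2) y0 * b2 (b0+h2) := by
          rw [Finset.sum_image (by intro a _ b _ h; have h' : b0 + a = b0 + b := h; omega)]
      _ = ∑ h2 ∈ E, ((Complex.normSq (Pfun g E a0 (b0+h2) y0) : ℝ) : ℂ) / (E.card : ℂ) := by
          refine Finset.sum_congr rfl fun h2 hh2 => ?_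
          have : b0 + h2 - b0 ∈ E := by simpa using hh2
          rw [hb2def]; dsimp only
          rw [if_pos this, mul_div_assoc', Complex.mul_conj]
      _ = _ := by
          rw [← Finset.sum_div]
          push_cast
          ring
  rw [hfinval, Complex.ofReal_re]
  -- final numeric estimate
  have h2H1 : δ * (N:ℝ) ≤ 2*(H:ℝ) - 1 := by
    have hH1r : (1:ℝ) ≤ (H:ℝ) := by exact_mod_cast hH1
    linarith
  have hpos : (0:ℝ) < 2*(H:ℝ) - 1 := by rw [← hcE]; exact hcEpos
  rw [hcE, le_div_iff₀ hpos]
  have hδN0 : (0:ℝ) ≤ δ * N := by positivity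
  have hsq : (δ*(N:ℝ))^2 ≤ (2*(H:ℝ)-1)^2 := by nlinarith
  nlinarith [hi, mul_le_mul_of_nonneg_left hsq (mul_nonneg hδ0.le hpos.le)]

/-! ### Wrapper machinery -/

def shear2 : ℤ×ℤ ≃ ℤ×ℤ where
  toFun p := (p.1 + p.2, p.2)
  invFun p := (p.1 - p.2, p.2)
  left_inv p := by simp
  right_inv p := by simp

def shear3 : ℤ×ℤ ≃ ℤ×ℤ where
  toFun p := (p.1 + p.2, -p.1)
  invFun p := (-p.2, p.1 + p.2)
  left_inv p := by simp
  right_inv p := by simp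

lemma sum_dil' {M : Type*} [AddCommMonoid M] (v1 v2 : ℤ) (hv : v1 = 1 ∨ v2 = 1)
    (S : Finset ℤ) (F : ℤ×ℤ → M) :
    ∑ a ∈ dil (v1, v2) S, F a = ∑ k ∈ S, F (v1*k, v2*k) :=
  sum_dil (v1, v2) hv S F

lemma neg_reindex (N : ℕ) (G : ℤ → ℂ) :
    ∑ v ∈ Finset.Ico (1-(N:ℤ)) 1, G v = ∑ x ∈ Finset.Ico (0:ℤ) (N:ℤ), G (-x) := by
  refine Finset.sum_nbij' (fun v => -v) (fun x => -x) ?_ ?_ ?_ ?_ ?_ <;>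
    intros a ha <;> simp_all [Finset.mem_Ico] <;> omega


set_option maxHeartbeats 1600000 in
/-- the `U¹ × U¹` inverse theorem. -/
theorem stmt16 :
    ∃ c : ℝ, 0 < c ∧
      ∀ δ : ℝ, 0 < δ → δ ≤ 1 →
      ∀ H N : ℕ, δ * (N : ℝ) ≤ (H : ℝ) → H ≤ N →
      ∀ f : ℤ × ℤ → ℂ, Bounded1 f → SuppOn2 (N : ℤ) f →
        ((δ * (N : ℝ) ^ 2 ≤
            (boxPow ![dil (1, 0) (Ipm (H : ℤ)), dil (0, 1) (Ipm (H : ℤ))] f).re →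
            ∃ b1 b2 : ℤ → ℂ, Bounded1 b1 ∧ Bounded1 b2 ∧
              c * δ ^ 3 * (N : ℝ) ^ 2 ≤
                (∑' x : ℤ, ∑' y : ℤ, f (x, y) * b1 x * b2 y).re) ∧
          (δ * (N : ℝ) ^ 2 ≤
            (boxPow ![dil (1, 0) (Ipm (H : ℤ)), dil (-1, 1) (Ipm (H : ℤ))] f).re →
            ∃ b1 b2 : ℤ → ℂ, Bounded1 b1 ∧ Bounded1 b2 ∧
              c * δ ^ 3 * (N : ℝ) ^ 2 ≤
                (∑' x : ℤ, ∑' y : ℤ, f (x, y) * b1 (x + y) * b2 y).re) ∧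
          (δ * (N : ℝ) ^ 2 ≤
            (boxPow ![dil (0, 1) (Ipm (H : ℤ)), dil (-1, 1) (Ipm (H : ℤ))] f).re →
            ∃ b1 b2 : ℤ → ℂ, Bounded1 b1 ∧ Bounded1 b2 ∧
              c * δ ^ 3 * (N : ℝ) ^ 2 ≤
                (∑' x : ℤ, ∑' y : ℤ, f (x, y) * b1 x * b2 (x + y)).re)) := by
  classical
  refine ⟨1/16, by norm_num, ?_⟩
  intro δ hδ0 hδ1 H N hδN hHN f hbf hsuppf
  rcases Nat.eq_zero_or_pos N with hN0 | hN1
  · subst hN0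
    have hf0 : ∀ p : ℤ×ℤ, f p = 0 := by
      intro p
      by_contra h
      have := (hsuppf p h).1
      simp [I0] at this
    refine ⟨?_, ?_, ?_⟩ <;>
    · intro _
      refine ⟨fun _ => 0, fun _ => 0, fun x => by simp [Bounded1], fun x => by simp [Bounded1], ?_⟩
      simp [hf0]
  · -- N ≥ 1
    have hN1' : (1:ℝ) ≤ (N:ℝ) := by exact_mod_cast hN1
    have hH1 : 1 ≤ H := by
      by_contra hh
      have hH0 : H = 0 := by omega
      rw [hH0] at hδN
      have : (0:ℝ) < δ * N := by positivity
      simp at hδN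
      linarith
    have hH1r : (1:ℝ) ≤ (H:ℝ) := by exact_mod_cast hH1
    have hcEZ : (((Ipm (H:ℤ)).card : ℤ)) = 2*(H:ℤ) - 1 := by
      unfold Ipm; rw [Int.card_Ioo]; omega
    have hcE : (((Ipm (H:ℤ)).card : ℝ)) = 2*(H:ℝ) - 1 := by exact_mod_cast hcEZ
    have hpos : (0:ℝ) < 2*(H:ℝ) - 1 := by linarith
    have h4pos : (0:ℝ) < (((Ipm (H:ℤ)).card : ℝ))^4 := by rw [hcE]; positivity
    have hden : ((((Ipm (H:ℤ)).card:ℂ)) * ((Ipm (H:ℤ)).card:ℂ))^2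
        = (((((Ipm (H:ℤ)).card:ℝ))^4 : ℝ) : ℂ) := by push_cast; ring
    have hNZ : (0:ℤ) < (N:ℤ) := by exact_mod_cast hN1
    have hsuppf' : ∀ p : ℤ×ℤ, f p ≠ 0 → p.1 ∈ Finset.Ico (0:ℤ) (N:ℤ) ∧ p.2 ∈ Finset.Ico (0:ℤ) (N:ℤ) :=
      fun p hp => hsuppf p hp
    refine ⟨?_, ?_, ?_⟩
    -- ### Case (i)
    · intro hyp
      rw [boxPow_two, card_dil (1,0) (Or.inl rfl), card_dil (0,1) (Or.inr rfl)] at hyp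
      have hnum : (∑ p ∈ dil (1,0) (Ipm (H:ℤ)) ×ˢ dil (0,1) (Ipm (H:ℤ)),
            ∑ q ∈ dil (1,0) (Ipm (H:ℤ)) ×ˢ dil (0,1) (Ipm (H:ℤ)),
            ∑' x : ℤ×ℤ, f (x + p.1 + p.2) * (starRingEnd ℂ) (f (x + q.1 + p.2)) *
              ((starRingEnd ℂ) (f (x + p.1 + q.2)) * f (x + q.1 + q.2)))
          = ∑ h1 ∈ Ipm (H:ℤ), ∑ h2 ∈ Ipm (H:ℤ), ∑ h1' ∈ Ipm (H:ℤ), ∑ h2' ∈ Ipm (H:ℤ),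
            ∑' x : ℤ×ℤ, f (x.1+h1, x.2+h2) * (starRingEnd ℂ) (f (x.1+h1', x.2+h2)) *
              ((starRingEnd ℂ) (f (x.1+h1, x.2+h2')) * f (x.1+h1', x.2+h2')) := by
        simp only [Finset.sum_product, sum_dil' 1 0 (Or.inl rfl), sum_dil' 0 1 (Or.inr rfl),
          one_mul, zero_mul]
        refine Finset.sum_congr rfl fun h1 _ => Finset.sum_congr rfl fun h2 _ =>
          Finset.sum_congr rfl fun h1' _ => Finset.sum_congr rfl fun h2' _ =>
          tsum_congr fun x => ?_
        have harg : ∀ a b : ℤ, x + (a, (0:ℤ)) + ((0:ℤ), b) = (x.1+a, x.2+b) := by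
          intro a b
          simp [Prod.ext_iff]
        rw [harg h1 h2, harg h1' h2, harg h1 h2', harg h1' h2']
      rw [hnum, hden, Complex.div_ofReal_re] at hyp
      have hT' : δ*(N:ℝ)^2*(2*(H:ℝ)-1)^4 ≤ (∑ h1 ∈ Ipm (H:ℤ), ∑ h2 ∈ Ipm (H:ℤ),
          ∑ h1' ∈ Ipm (H:ℤ), ∑ h2' ∈ Ipm (H:ℤ),
          ∑' x : ℤ×ℤ, f (x.1+h1, x.2+h2) * (starRingEnd ℂ) (f (x.1+h1', x.2+h2)) *
            ((starRingEnd ℂ) (f (x.1+h1, x.2+h2')) * f (x.1+h1', x.2+h2'))).re := by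
        have := (le_div_iff₀ h4pos).mp hyp
        rwa [hcE] at this
      obtain ⟨b1, b2, h1, h2, h3⟩ := core_s16 δ hδ0 H N hH1 hN1 hδN hHN 0 (N:ℤ) 0 (N:ℤ)
        hNZ hNZ (by omega) (by omega) f hbf hsuppf' hT'
      exact ⟨b1, b2, h1, h2, h3⟩
    -- ### Case (ii)
    · intro hyp
      set g : ℤ×ℤ → ℂ := fun u => f (u.1 - u.2, u.2) with hg
      have hbg : Bounded1 g := fun u => hbf _
      have hsuppg : ∀ p : ℤ×ℤ, g p ≠ 0 →
          p.1 ∈ Finset.Ico (0:ℤ) (2*(N:ℤ)) ∧ p.2 ∈ Finset.Ico (0:ℤ) (N:ℤ) := by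
        intro p hp
        obtain ⟨m1, m2⟩ := hsuppf' _ hp
        simp only [Finset.mem_Ico] at m1 m2 ⊢
        omega
      rw [boxPow_two, card_dil (1,0) (Or.inl rfl), card_dil (-1,1) (Or.inr rfl)] at hyp
      have hnum : (∑ p ∈ dil (1,0) (Ipm (H:ℤ)) ×ˢ dil (-1,1) (Ipm (H:ℤ)),
            ∑ q ∈ dil (1,0) (Ipm (H:ℤ)) ×ˢ dil (-1,1) (Ipm (H:ℤ)),
            ∑' x : ℤ×ℤ, f (x + p.1 + p.2) * (starRingEnd ℂ) (f (x + q.1 + p.2)) *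
              ((starRingEnd ℂ) (f (x + p.1 + q.2)) * f (x + q.1 + q.2)))
          = ∑ h1 ∈ Ipm (H:ℤ), ∑ h2 ∈ Ipm (H:ℤ), ∑ h1' ∈ Ipm (H:ℤ), ∑ h2' ∈ Ipm (H:ℤ),
            ∑' x : ℤ×ℤ, g (x.1+h1, x.2+h2) * (starRingEnd ℂ) (g (x.1+h1', x.2+h2)) *
              ((starRingEnd ℂ) (g (x.1+h1, x.2+h2')) * g (x.1+h1', x.2+h2')) := by
        simp only [Finset.sum_product, sum_dil' 1 0 (Or.inl rfl), sum_dil' (-1) 1 (Or.inr rfl),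
          one_mul, zero_mul, neg_mul]
        refine Finset.sum_congr rfl fun h1 _ => Finset.sum_congr rfl fun h2 _ =>
          Finset.sum_congr rfl fun h1' _ => Finset.sum_congr rfl fun h2' _ => ?_
        rw [← Equiv.tsum_eq shear2 (fun u : ℤ×ℤ => g (u.1+h1, u.2+h2) *
          (starRingEnd ℂ) (g (u.1+h1', u.2+h2)) *
          ((starRingEnd ℂ) (g (u.1+h1, u.2+h2')) * g (u.1+h1', u.2+h2')))]
        refine tsum_congr fun x => ?_
        have hfac : ∀ a b : ℤ, f (x + (a,(0:ℤ)) + (-b, b)) = g ((x.1+x.2)+a, x.2+b) := by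
          intro a b
          rw [hg]
          show f _ = f _
          congr 1
          simp [Prod.ext_iff]
          all_goals omega
        show _ = g ((x.1+x.2)+h1, x.2+h2) * (starRingEnd ℂ) (g ((x.1+x.2)+h1', x.2+h2)) *
          ((starRingEnd ℂ) (g ((x.1+x.2)+h1, x.2+h2')) * g ((x.1+x.2)+h1', x.2+h2'))
        rw [hfac h1 h2, hfac h1' h2, hfac h1 h2', hfac h1' h2']
      rw [hnum, hden, Complex.div_ofReal_re] at hyp
      have hT' : δ*(N:ℝ)^2*(2*(H:ℝ)-1)^4 ≤ (∑ h1 ∈ Ipm (H:ℤ), ∑ h2 ∈ Ipm (H:ℤ),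
          ∑ h1' ∈ Ipm (H:ℤ), ∑ h2' ∈ Ipm (H:ℤ),
          ∑' x : ℤ×ℤ, g (x.1+h1, x.2+h2) * (starRingEnd ℂ) (g (x.1+h1', x.2+h2)) *
            ((starRingEnd ℂ) (g (x.1+h1, x.2+h2')) * g (x.1+h1', x.2+h2'))).re := by
        have := (le_div_iff₀ h4pos).mp hyp
        rwa [hcE] at this
      obtain ⟨b1, b2, h1, h2, h3⟩ := core_s16 δ hδ0 H N hH1 hN1 hδN hHN 0 (2*(N:ℤ)) 0 (N:ℤ)
        (by omega) hNZ (by omega) (by omega) g hbg hsuppg hT'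
      refine ⟨b1, b2, h1, h2, ?_⟩
      have heq : (∑' x : ℤ, ∑' y : ℤ, f (x, y) * b1 (x + y) * b2 y)
          = (∑' x : ℤ, ∑' y : ℤ, g (x, y) * b1 x * b2 y) := by
        rw [tsum_tsum_eq (Finset.Ico (0:ℤ) (N:ℤ)) (Finset.Ico (0:ℤ) (N:ℤ))
          (fun x y => f (x, y) * b1 (x + y) * b2 y) (by
            intro x y hne
            refine hsuppf' (x,y) fun h0 => hne ?_
            simp [h0])]
        rw [tsum_tsum_eq (Finset.Ico (0:ℤ) (2*(N:ℤ))) (Finset.Ico (0:ℤ) (N:ℤ))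
          (fun x y => g (x, y) * b1 x * b2 y) (by
            intro x y hne
            refine hsuppg (x,y) fun h0 => hne ?_
            simp [h0])]
        rw [Finset.sum_comm, Finset.sum_comm (s := Finset.Ico (0:ℤ) (2*(N:ℤ)))]
        refine Finset.sum_congr rfl fun y hy => ?_
        rw [shift_sum N y hy (fun u => g (u, y) * b1 u * b2 y) (by
          intro u hne
          have hgne : g (u, y) ≠ 0 := fun h0 => hne (by simp [h0])
          have := (hsuppf' _ hgne).1
          simp only [Finset.mem_Ico] at this ⊢
          omega)]
        refine Finset.sum_congr rfl fun z _ => ?_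
        have hgz : g (y + z, y) = f (z, y) := by
          rw [hg]
          show f _ = f _
          congr 1
          simp [Prod.ext_iff]
          all_goals omega
        rw [hgz, add_comm y z]
      rw [heq]
      exact h3
    -- ### Case (iii)
    · intro hyp
      set g : ℤ×ℤ → ℂ := fun u => f (-u.2, u.1 + u.2) with hg
      have hbg : Bounded1 g := fun u => hbf _
      have hsuppg : ∀ p : ℤ×ℤ, g p ≠ 0 →
          p.1 ∈ Finset.Ico (0:ℤ) (2*(N:ℤ)) ∧ p.2 ∈ Finset.Ico (1-(N:ℤ)) 1 := by
        intro p hp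
        obtain ⟨m1, m2⟩ := hsuppf' _ hp
        simp only [Finset.mem_Ico] at m1 m2 ⊢
        omega
      rw [boxPow_two, card_dil (0,1) (Or.inr rfl), card_dil (-1,1) (Or.inr rfl)] at hyp
      have hnum : (∑ p ∈ dil (0,1) (Ipm (H:ℤ)) ×ˢ dil (-1,1) (Ipm (H:ℤ)),
            ∑ q ∈ dil (0,1) (Ipm (H:ℤ)) ×ˢ dil (-1,1) (Ipm (H:ℤ)),
            ∑' x : ℤ×ℤ, f (x + p.1 + p.2) * (starRingEnd ℂ) (f (x + q.1 + p.2)) *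
              ((starRingEnd ℂ) (f (x + p.1 + q.2)) * f (x + q.1 + q.2)))
          = ∑ h1 ∈ Ipm (H:ℤ), ∑ h2 ∈ Ipm (H:ℤ), ∑ h1' ∈ Ipm (H:ℤ), ∑ h2' ∈ Ipm (H:ℤ),
            ∑' x : ℤ×ℤ, g (x.1+h1, x.2+h2) * (starRingEnd ℂ) (g (x.1+h1', x.2+h2)) *
              ((starRingEnd ℂ) (g (x.1+h1, x.2+h2')) * g (x.1+h1', x.2+h2')) := by
        simp only [Finset.sum_product, sum_dil' 0 1 (Or.inr rfl), sum_dil' (-1) 1 (Or.inr rfl),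
          one_mul, zero_mul, neg_mul]
        refine Finset.sum_congr rfl fun h1 _ => Finset.sum_congr rfl fun h2 _ =>
          Finset.sum_congr rfl fun h1' _ => Finset.sum_congr rfl fun h2' _ => ?_
        rw [← Equiv.tsum_eq shear3 (fun u : ℤ×ℤ => g (u.1+h1, u.2+h2) *
          (starRingEnd ℂ) (g (u.1+h1', u.2+h2)) *
          ((starRingEnd ℂ) (g (u.1+h1, u.2+h2')) * g (u.1+h1', u.2+h2')))]
        refine tsum_congr fun x => ?_
        have hfac : ∀ a b : ℤ, f (x + ((0:ℤ), a) + (-b, b)) = g ((x.1+x.2)+a, (-x.1)+b) := by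
          intro a b
          rw [hg]
          show f _ = f _
          congr 1
          simp [Prod.ext_iff]
          all_goals omega
        show _ = g ((x.1+x.2)+h1, (-x.1)+h2) * (starRingEnd ℂ) (g ((x.1+x.2)+h1', (-x.1)+h2)) *
          ((starRingEnd ℂ) (g ((x.1+x.2)+h1, (-x.1)+h2')) * g ((x.1+x.2)+h1', (-x.1)+h2'))
        rw [hfac h1 h2, hfac h1' h2, hfac h1 h2', hfac h1' h2']
      rw [hnum, hden, Complex.div_ofReal_re] at hyp
      have hT' : δ*(N:ℝ)^2*(2*(H:ℝ)-1)^4 ≤ (∑ h1 ∈ Ipm (H:ℤ), ∑ h2 ∈ Ipm (H:ℤ),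
          ∑ h1' ∈ Ipm (H:ℤ), ∑ h2' ∈ Ipm (H:ℤ),
          ∑' x : ℤ×ℤ, g (x.1+h1, x.2+h2) * (starRingEnd ℂ) (g (x.1+h1', x.2+h2)) *
            ((starRingEnd ℂ) (g (x.1+h1, x.2+h2')) * g (x.1+h1', x.2+h2'))).re := by
        have := (le_div_iff₀ h4pos).mp hyp
        rwa [hcE] at this
      obtain ⟨b1, b2, h1, h2, h3⟩ := core_s16 δ hδ0 H N hH1 hN1 hδN hHN 0 (2*(N:ℤ)) (1-(N:ℤ)) 1
        (by omega) (by omega) (by omega) (by omega) g hbg hsuppg hT'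
      refine ⟨fun x => b2 (-x), b1, fun x => h2 (-x), h1, ?_⟩
      have heq : (∑' x : ℤ, ∑' y : ℤ, f (x, y) * b2 (-x) * b1 (x + y))
          = (∑' x : ℤ, ∑' y : ℤ, g (x, y) * b1 x * b2 y) := by
        rw [tsum_tsum_eq (Finset.Ico (0:ℤ) (N:ℤ)) (Finset.Ico (0:ℤ) (N:ℤ))
          (fun x y => f (x, y) * b2 (-x) * b1 (x + y)) (by
            intro x y hne
            refine hsuppf' (x,y) fun h0 => hne ?_
            simp [h0])]
        rw [tsum_tsum_eq (Finset.Ico (0:ℤ) (2*(N:ℤ))) (Finset.Ico (1-(N:ℤ)) 1)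
          (fun x y => g (x, y) * b1 x * b2 y) (by
            intro x y hne
            refine hsuppg (x,y) fun h0 => hne ?_
            simp [h0])]
        rw [Finset.sum_comm (s := Finset.Ico (0:ℤ) (2*(N:ℤ)))]
        rw [neg_reindex N (fun v => ∑ u ∈ Finset.Ico (0:ℤ) (2*(N:ℤ)), g (u, v) * b1 u * b2 v)]
        refine Finset.sum_congr rfl fun x hx => ?_
        rw [shift_sum N x hx (fun u => g (u, -x) * b1 u * b2 (-x)) (by
          intro u hne
          have hgne : g (u, -x) ≠ 0 := fun h0 => hne (by simp [h0])
          have := (hsuppf' _ hgne).2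
          simp only [Finset.mem_Ico] at this ⊢
          omega)]
        refine Finset.sum_congr rfl fun y _ => ?_
        have hgz : g (x + y, -x) = f (x, y) := by
          rw [hg]
          show f _ = f _
          congr 1
          simp [Prod.ext_iff]
          all_goals omega
        rw [hgz, mul_right_comm]
      rw [heq]
      exact h3
end
end

section
/- For every D ∈ ℕ there is a constant C_D > 0 such that the following holds. Let Q, T ∈ ℕ, let R ∈ ℝ[z] be a polynomial of degree at most D, and let a, b ∈ ℤ with |a| ≤ QT and 0 < |b| ≤ Q. Let R̃(z) := R(a + bz). Then ‖b^D·R‖_{C^∞[T]} ≤ C_D · Q^{D−1} · ‖R̃‖_{C^∞[T]}, where b^D·R denotes the polynomial R with all coefficients multiplied by b^D. -/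
open Polynomial

noncomputable section

/-- The distance from a real number to the nearest integer, `‖x‖_{ℝ/ℤ}`. -/
def dInt (x : ℝ) : ℝ := |x - round x|

/-- `SmoothBdd D T p Q` says that the smoothness norm
`‖p‖_{C^∞[T]} = max_{1 ≤ j ≤ D} T^j ‖p_j‖_{ℝ/ℤ}` is at most `Q`. -/
def SmoothBdd (D : ℕ) (T : ℝ) (p : Polynomial ℝ) (Q : ℝ) : Prop :=
  ∀ j : ℕ, 1 ≤ j → j ≤ D → T ^ j * dInt (p.coeff j) ≤ Q

open Finset

lemma dInt_nonneg (x : ℝ) : 0 ≤ dInt x := abs_nonneg _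

lemma dInt_le (x : ℝ) (n : ℤ) : dInt x ≤ |x - n| := round_le x n

lemma dInt_add_le (x y : ℝ) : dInt (x + y) ≤ dInt x + dInt y := by
  calc dInt (x + y) ≤ |x + y - ((round x + round y : ℤ) : ℝ)| := dInt_le _ _
    _ ≤ dInt x + dInt y := by
        push_cast
        have : x + y - ((round x : ℝ) + (round y : ℝ)) = (x - round x) + (y - round y) := by ring
        rw [this]; exact abs_add_le _ _

lemma dInt_int_mul (n : ℤ) (x : ℝ) : dInt ((n : ℝ) * x) ≤ |(n : ℝ)| * dInt x := by
  calc dInt ((n : ℝ) * x) ≤ |(n : ℝ) * x - ((n * round x : ℤ) : ℝ)| := dInt_le _ _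
    _ = |(n : ℝ)| * dInt x := by
        push_cast
        rw [← mul_sub, abs_mul, dInt]

lemma dInt_sum_le {s : Finset ℕ} (f : ℕ → ℝ) :
    dInt (∑ k ∈ s, f k) ≤ ∑ k ∈ s, dInt (f k) := by
  classical
  induction s using Finset.induction_on with
  | empty => simp [dInt]
  | insert _ _ h ih =>
      rw [Finset.sum_insert h, Finset.sum_insert h]
      exact (dInt_add_le _ _).trans (by linarith)

lemma coeff_affine_pow (c d : ℝ) (hd : d ≠ 0) (k j : ℕ) :
    ((C c + C d * X) ^ k).coeff j = d ^ k * ((c / d) ^ (k - j) * (k.choose j : ℝ)) := by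
  have h0 : d * (c / d) = c := by field_simp
  have h1 : C c + C d * X = C d * (X + C (c / d)) := by
    rw [mul_add, ← C_mul, h0, add_comm]
  rw [h1, mul_pow, ← C_pow, coeff_C_mul, coeff_X_add_C_pow]

lemma coeff_comp_affine (p : ℝ[X]) {D : ℕ} (hp : p.natDegree ≤ D) (c d : ℝ) (hd : d ≠ 0)
    (j : ℕ) :
    (p.comp (C c + C d * X)).coeff j
      = ∑ k ∈ range (D + 1), p.coeff k * (d ^ k * ((c / d) ^ (k - j) * (k.choose j : ℝ))) := by
  have h1 : p.comp (C c + C d * X)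
      = ∑ k ∈ range (D + 1), C (p.coeff k) * (C c + C d * X) ^ k :=
    eval₂_eq_sum_range' _ (lt_of_le_of_lt hp (lt_add_one D)) _
  rw [h1, finset_sum_coeff]
  exact Finset.sum_congr rfl fun k _ => by rw [coeff_C_mul, coeff_affine_pow c d hd]

/-- smoothness norms under affine substitution. -/
theorem stmt17 (D : ℕ) :
    ∃ C₀ : ℝ, 0 < C₀ ∧
      ∀ Q T : ℕ, 1 ≤ Q → 1 ≤ T →
      ∀ R : Polynomial ℝ, R.natDegree ≤ D →
      ∀ a b : ℤ, |a| ≤ (Q : ℤ) * (T : ℤ) → b ≠ 0 → |b| ≤ (Q : ℤ) →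
      ∀ M : ℝ,
        SmoothBdd D (T : ℝ) (R.comp (Polynomial.C (a : ℝ) + Polynomial.C (b : ℝ) * X)) M →
        SmoothBdd D (T : ℝ) (Polynomial.C ((b : ℝ) ^ D) * R)
          (C₀ * (Q : ℝ) ^ ((D : ℤ) - 1) * M) := by
  refine ⟨(D + 1) * 2 ^ D, by positivity, ?_⟩
  intro Q T hQ hT R hR a b ha hbne hb M hsm
  intro j hj1 hjD
  set Rt := R.comp (C (a : ℝ) + C (b : ℝ) * X) with hRt
  have hb0 : (b : ℝ) ≠ 0 := Int.cast_ne_zero.mpr hbne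
  have ht1 : (1 : ℝ) ≤ (T : ℝ) := by exact_mod_cast hT
  have hq1 : (1 : ℝ) ≤ (Q : ℝ) := by exact_mod_cast hQ
  have ht0 : (0 : ℝ) < (T : ℝ) := lt_of_lt_of_le one_pos ht1
  -- M is nonnegative
  have hM : 0 ≤ M :=
    le_trans (mul_nonneg (pow_nonneg ht0.le j) (dInt_nonneg _)) (hsm j hj1 hjD)
  -- natDegree of Rt
  have hRtdeg : Rt.natDegree ≤ D := by
    rw [hRt, natDegree_comp]
    have : (C (a : ℝ) + C (b : ℝ) * X).natDegree ≤ 1 := by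
      apply le_trans (natDegree_add_le _ _)
      simp [natDegree_C_mul_le, natDegree_C]
      exact le_trans (natDegree_mul_le) (by simp)
    calc R.natDegree * (C (a : ℝ) + C (b : ℝ) * X).natDegree ≤ R.natDegree * 1 :=
          Nat.mul_le_mul_left _ this
      _ ≤ D := by simpa using hR
  -- recover R from Rt
  have hinv : Rt.comp (C (-(a : ℝ) / b) + C (1 / (b : ℝ)) * X) = R := by
    rw [hRt, Polynomial.comp_assoc]
    have e1 : (b : ℝ) * (-(a : ℝ) / b) = -a := by field_simp
    have e2 : (b : ℝ) * (1 / (b : ℝ)) = 1 := by field_simp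
    have : (C (a : ℝ) + C (b : ℝ) * X).comp (C (-(a : ℝ) / b) + C (1 / (b : ℝ)) * X) = X := by
      simp only [add_comp, C_comp, mul_comp, X_comp, mul_add, ← mul_assoc, ← C_mul, e1, e2]
      simp [map_neg]
    rw [this, comp_X]
  -- the integer coefficients
  set c : ℕ → ℤ := fun k => (k.choose j : ℤ) * (-a) ^ (k - j) * b ^ (D - k) with hc
  -- coefficient identity
  have hcoeff : ((b : ℝ) ^ D) * R.coeff j = ∑ k ∈ range (D + 1), (c k : ℝ) * Rt.coeff k := by
    rw [← hinv, coeff_comp_affine Rt hRtdeg _ _ (by positivity), Finset.mul_sum]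
    refine Finset.sum_congr rfl fun k hk => ?_
    have hkD : k ≤ D := by simpa [Nat.lt_succ_iff] using Finset.mem_range.mp hk
    have e3 : -(a : ℝ) / b / (1 / (b : ℝ)) = -a := by field_simp
    have e4 : (b : ℝ) ^ D * (1 / b) ^ k = (b : ℝ) ^ (D - k) := by
      have : (b : ℝ) ^ D = b ^ (D - k) * b ^ k := by rw [← pow_add]; congr 1; omega
      rw [this, mul_assoc, ← mul_pow, mul_one_div, div_self hb0, one_pow, mul_one]
    rw [e3]
    calc (b:ℝ)^D * (Rt.coeff k * ((1/(b:ℝ))^k * ((-(a:ℝ))^(k-j) * (k.choose j : ℝ))))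
        = ((b:ℝ)^D * (1/b)^k) * ((-(a:ℝ))^(k-j) * (k.choose j : ℝ)) * Rt.coeff k := by ring
      _ = (c k : ℝ) * Rt.coeff k := by simp only [hc]; push_cast; rw [e4]; ring
  -- the estimate
  rw [coeff_C_mul, hcoeff]
  have hbd : dInt (∑ k ∈ range (D + 1), (c k : ℝ) * Rt.coeff k)
      ≤ ∑ k ∈ range (D + 1), |(c k : ℝ)| * dInt (Rt.coeff k) :=
    (dInt_sum_le _).trans (Finset.sum_le_sum fun k _ => dInt_int_mul (c k) _)
  have hzpow : (Q : ℝ) ^ ((D : ℤ) - 1) = (Q : ℝ) ^ (D - 1 : ℕ) := by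
    rw [show ((D : ℤ) - 1) = ((D - 1 : ℕ) : ℤ) by omega, zpow_natCast]
  have key : ∀ k ∈ range (D + 1),
      (T : ℝ) ^ j * (|(c k : ℝ)| * dInt (Rt.coeff k)) ≤ 2 ^ D * (Q : ℝ) ^ (D - 1 : ℕ) * M := by
    intro k hk
    have hkD : k ≤ D := by simpa [Nat.lt_succ_iff] using Finset.mem_range.mp hk
    by_cases hkj : k < j
    · have hc0 : c k = 0 := by simp [hc, Nat.choose_eq_zero_of_lt hkj]
      rw [hc0]
      simp only [Int.cast_zero, abs_zero, zero_mul, mul_zero]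
      positivity
    · push_neg at hkj
      have hd0 : 0 ≤ dInt (Rt.coeff k) := dInt_nonneg _
      have haR : |(a : ℝ)| ≤ (Q : ℝ) * (T : ℝ) := by
        rw [← Int.cast_abs]; exact_mod_cast ha
      have hbR : |(b : ℝ)| ≤ (Q : ℝ) := by
        rw [← Int.cast_abs]; exact_mod_cast hb
      have habs : |(c k : ℝ)| ≤ (k.choose j : ℝ) * ((Q : ℝ) * (T : ℝ)) ^ (k - j)
          * (Q : ℝ) ^ (D - k) := by
        have h1 : |(c k : ℝ)| = (k.choose j : ℝ) * |(a : ℝ)| ^ (k - j) * |(b : ℝ)| ^ (D - k) := by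
          simp only [hc]
          push_cast
          rw [abs_mul, abs_mul, abs_pow, abs_pow, abs_neg, Nat.abs_cast]
        rw [h1]
        gcongr
      have eT : (T : ℝ) ^ j * (T : ℝ) ^ (k - j) = (T : ℝ) ^ k := by
        rw [← pow_add]; congr 1; omega
      have eQ : (Q : ℝ) ^ (k - j) * (Q : ℝ) ^ (D - k) = (Q : ℝ) ^ (D - j) := by
        rw [← pow_add]; congr 1; omega
      have h2 : (k.choose j : ℝ) ≤ 2 ^ D := by
        have h2' : k.choose j ≤ 2 ^ D :=
          calc k.choose j ≤ ∑ i ∈ range (k + 1), k.choose i :=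
                Finset.single_le_sum (f := fun i => k.choose i) (fun i _ => Nat.zero_le _)
                  (Finset.mem_range.mpr (Nat.lt_succ_of_le hkj))
            _ = 2 ^ k := Nat.sum_range_choose k
            _ ≤ 2 ^ D := Nat.pow_le_pow_right (by norm_num) hkD
        exact_mod_cast h2'
      have h3 : (Q : ℝ) ^ (D - j) ≤ (Q : ℝ) ^ (D - 1 : ℕ) := by
        apply pow_le_pow_right₀ hq1; omega
      have h4 : (T : ℝ) ^ k * dInt (Rt.coeff k) ≤ M := hsm k (le_trans hj1 hkj) hkD
      have h5 : 0 ≤ (T : ℝ) ^ k * dInt (Rt.coeff k) := mul_nonneg (by positivity) hd0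
      calc (T : ℝ) ^ j * (|(c k : ℝ)| * dInt (Rt.coeff k))
          ≤ (T : ℝ) ^ j * (((k.choose j : ℝ) * ((Q : ℝ) * (T : ℝ)) ^ (k - j)
              * (Q : ℝ) ^ (D - k)) * dInt (Rt.coeff k)) := by gcongr
        _ = (k.choose j : ℝ) * ((Q : ℝ) ^ (k - j) * (Q : ℝ) ^ (D - k))
              * ((T : ℝ) ^ j * (T : ℝ) ^ (k - j) * dInt (Rt.coeff k)) := by
            rw [mul_pow]; ring
        _ = (k.choose j : ℝ) * (Q : ℝ) ^ (D - j) * ((T : ℝ) ^ k * dInt (Rt.coeff k)) := by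
            rw [eT, eQ]
        _ ≤ 2 ^ D * (Q : ℝ) ^ (D - 1 : ℕ) * M := by
            apply mul_le_mul (mul_le_mul h2 h3 (by positivity) (by positivity)) h4 h5
              (by positivity)
  calc (T : ℝ) ^ j * dInt (∑ k ∈ range (D + 1), (c k : ℝ) * Rt.coeff k)
      ≤ (T : ℝ) ^ j * ∑ k ∈ range (D + 1), |(c k : ℝ)| * dInt (Rt.coeff k) :=
        mul_le_mul_of_nonneg_left hbd (by positivity)
    _ = ∑ k ∈ range (D + 1), (T : ℝ) ^ j * (|(c k : ℝ)| * dInt (Rt.coeff k)) :=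
        Finset.mul_sum _ _ _
    _ ≤ ∑ _k ∈ range (D + 1), 2 ^ D * (Q : ℝ) ^ (D - 1 : ℕ) * M := Finset.sum_le_sum key
    _ = ((D : ℝ) + 1) * 2 ^ D * (Q : ℝ) ^ ((D : ℤ) - 1) * M := by
        rw [Finset.sum_const, Finset.card_range, nsmul_eq_mul, hzpow]; push_cast; ring
end
end
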